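/- arXiv:1110.2505 — 4 statements merged into one kernel-verified Lean document; each statement's English description precedes it below -/
import Mathlib

section
/- Theorem 2.1 (push-forwards on projective towers, full version with auxiliary variables, stated coefficient-wise): Let a formal push-forward tower with Segre data satisfy the Segre assumption, and for each 1 ≤ i ≤ k let A_i be a finite set and n_{i,u} a nonnegative integer for each u ∈ A_i. Then for all nonnegative integers n_1, …, n_k, the element (P_1 ∘ P_2 ∘ ⋯ ∘ P_k)( Π_{i=1}^{k} c_i^{ n_i + Σ_{u ∈ A_i} n_{i,u} } ) of R_0 equals the sum, over all tuples of integers (d_{i,m})_{1 ≤ i ≤ k, m ∈ M_i} and vectors (β_{i,m})_{1 ≤ i ≤ k, m ∈ M_i} with β_{i,m} ∈ ℕ^{i−1}, subject to the constraints that for every i one has Σ_{m ∈ M_i} (d_{i,m} − |β_{i,m}|) + Σ_{i' > i} Σ_{m ∈ M_{i'}} β^{i}_{i',m} + Σ_{u ∈ A_i} n_{i,u} = −n_i − 1, of the products Π_{i=1}^{k} Π_{m ∈ M_i} q_{m, d_{i,m}} · C(d_{i,m}, β_{i,m}) · Π_{j=1}^{i−1} (m^j)^{β^j_{i,m}}; moreover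 only finitely many tuples contribute a nonzero term. This is the coefficient-wise form of the identity π_* Π_{i=1}^{k} ( (u_i − c_i)^{−1} Π_{u ∈ A_i} (u − c_i)^{−1} ) = [ Π_{i=1}^{k} Π_{m ∈ M_i} Q_m(u_i + m^{i−1} u_{i−1} + ⋯ + m^1 u_1) Π_{u ∈ A_i} (u − u_i)^{−1} ]_−, where Q_m is expanded in non-negative powers of u_1, …, u_{i−1}, each (u − u_i)^{−1} is expanded in non-negative powers of u_i, and [⋯]_− keeps only monomials in which every variable has negative exponent. -/
open scoped Classical

/-- Composite push-forward `P_1 ∘ P_2 ∘ ⋯ ∘ P_n : R_n → R_0` of a tower, where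
`P i : R (i+1) → R i` abstracts the push-forward `π^{i+1}_*`. -/
def pushAll {R : ℕ → Type*} [∀ i, CommRing (R i)] (P : ∀ i, R (i + 1) →+ R i) :
    ∀ n, R n → R 0
  | 0, x => x
  | n + 1, x => pushAll P n (P n x)

/-- Composite pull-back `R_0 → R_n` of a tower, where `f i : R i → R (i+1)` abstracts the
pull-back along `π^{i+1}`. -/
def pullTo {R : ℕ → Type*} [∀ i, CommRing (R i)] (f : ∀ i, R i →+* R (i + 1)) :
    ∀ n, R 0 →+* R n
  | 0 => RingHom.id _
  | n + 1 => (f n).comp (pullTo f n)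

/-- The generalized multinomial coefficient
`C(d, β) = d(d-1)⋯(d-|β|+1) / (β^1! ⋯ β^{i-1}!) ∈ ℤ`, defined for any `d : ℤ` and any
vector `β` of natural numbers. -/
noncomputable def genMultinomial {ι : Type*} [Fintype ι] (d : ℤ) (β : ι → ℕ) : ℤ :=
  Ring.choose d (∑ j, β j) * Nat.multinomial Finset.univ β

/-- The general term of the right-hand side of formula (1.5) (and of the more general (2.1)) of
the paper, as a function of a tuple `p = ((d_{i,m}), (β_{i,m}))`.  Here the Lean index
`i : Fin k` corresponds to the paper index `i+1 ∈ {1, …, k}`, `M` are the index sets of the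
Segre data, `mv (i+1) m j = m^j` for `1 ≤ j ≤ i` are the integer vectors, `q (i+1) m d = q_{m,d}`
are the Laurent coefficients of `Q_m`, `extra (i+1) = Σ_{u ∈ A_{i+1}} n_{i+1,u}` records the
auxiliary exponents (zero when all `A_i` are empty), and `n (i+1) = n_{i+1}` are the exponents
of the tautological classes.  The `if` encodes the constraint fixing the exponent of each
variable `u_{i+1}` to `-n_{i+1} - 1`, i.e. the truncation `[⋯]_-`. -/
noncomputable def towerTerm {R0 : Type*} [CommRing R0] (k : ℕ)
    (M : ℕ → Type) [∀ i, Fintype (M i)]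
    (mv : ∀ i, M i → ℕ → ℤ) (q : ∀ i, M i → ℤ → R0)
    (extra : ℕ → ℤ) (n : ℕ → ℕ)
    (p : (∀ i : Fin k, M (i.1 + 1) → ℤ) × (∀ i : Fin k, M (i.1 + 1) → Fin i.1 → ℕ)) : R0 :=
  if ∀ i : Fin k,
      (∑ m, (p.1 i m - ∑ j, (p.2 i m j : ℤ)))
        + (∑ i' : Fin k, ∑ m, if h : i.1 < i'.1 then (p.2 i' m ⟨i.1, h⟩ : ℤ) else 0)
        + extra (i.1 + 1)
      = -(n (i.1 + 1) : ℤ) - 1 then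
    ∏ i : Fin k, ∏ m,
      q (i.1 + 1) m (p.1 i m) *
        ((genMultinomial (p.1 i m) (p.2 i m) *
            ∏ j : Fin i.1, mv (i.1 + 1) m (j.1 + 1) ^ p.2 i m j : ℤ) : R0)
  else 0

/-- helper: products over `Icc 1 t` as products over `Fin t`. -/
lemma prodIccFin {G : Type*} [CommMonoid G] (t : ℕ) (F : ℕ → G) :
    ∏ i ∈ Finset.Icc 1 t, F i = ∏ j : Fin t, F (j.1 + 1) := by
  rw [← Finset.Ico_add_one_right_eq_Icc, Finset.prod_Ico_eq_prod_range,
    Fin.prod_univ_eq_prod_range (fun i => F (i + 1))]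
  simp [Nat.add_comm]

lemma sumIccFin {G : Type*} [AddCommMonoid G] (t : ℕ) (F : ℕ → G) :
    ∑ i ∈ Finset.Icc 1 t, F i = ∑ j : Fin t, F (j.1 + 1) := by
  rw [← Finset.Ico_add_one_right_eq_Icc, Finset.sum_Ico_eq_sum_range,
    Fin.sum_univ_eq_sum_range (fun i => F (i + 1))]
  simp [Nat.add_comm]

noncomputable def glue {t : ℕ} (M : ℕ → Type)
    (d : M (t + 1) → ℤ) (β : M (t + 1) → Fin t → ℕ)
    (p : (∀ i : Fin t, M (i.1 + 1) → ℤ) × (∀ i : Fin t, M (i.1 + 1) → Fin i.1 → ℕ)) :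
    (∀ i : Fin (t + 1), M (i.1 + 1) → ℤ) × (∀ i : Fin (t + 1), M (i.1 + 1) → Fin i.1 → ℕ) :=
  (Fin.snoc (α := fun i : Fin (t+1) => M (i.1 + 1) → ℤ) p.1 d,
   Fin.snoc (α := fun i : Fin (t+1) => M (i.1 + 1) → Fin i.1 → ℕ) p.2 β)

theorem towerTerm_glue {R0 : Type*} [CommRing R0] (t : ℕ) (M : ℕ → Type) [∀ i, Fintype (M i)]
    (mv : ∀ i, M i → ℕ → ℤ) (q : ∀ i, M i → ℤ → R0) (E : ℕ → ℤ) (n : ℕ → ℕ)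
    (d : M (t + 1) → ℤ) (β : M (t + 1) → Fin t → ℕ)
    (p : (∀ i : Fin t, M (i.1 + 1) → ℤ) × (∀ i : Fin t, M (i.1 + 1) → Fin i.1 → ℕ)) :
    towerTerm (t + 1) M mv q E n (glue M d β p) =
      (if (∑ m, (d m - ∑ j, (β m j : ℤ))) + E (t + 1) = -(n (t + 1) : ℤ) - 1 then
        ∏ m, q (t + 1) m (d m) *
          ((genMultinomial (d m) (β m) *
              ∏ j : Fin t, mv (t + 1) m (j.1 + 1) ^ β m j : ℤ) : R0)
      else 0) *
      towerTerm t M mv q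
        (fun i => E i + if h : i - 1 < t then (∑ m, (β m ⟨i - 1, h⟩ : ℤ)) else 0) n p := by
  set E' : ℕ → ℤ := fun i => E i + if h : i - 1 < t then (∑ m, (β m ⟨i - 1, h⟩ : ℤ)) else 0
    with hE'
  set Cond : Fin (t + 1) → Prop := fun i =>
      (∑ m, ((glue M d β p).1 i m - ∑ j, ((glue M d β p).2 i m j : ℤ)))
        + (∑ i' : Fin (t + 1), ∑ m, if h : i.1 < i'.1 then
            ((glue M d β p).2 i' m ⟨i.1, h⟩ : ℤ) else 0)
        + E (i.1 + 1)
      = -(n (i.1 + 1) : ℤ) - 1 with hCond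
  have hlast : Cond (Fin.last t) ↔
      ((∑ m, (d m - ∑ j, (β m j : ℤ))) + E (t + 1) = -(n (t + 1) : ℤ) - 1) := by
    have h0 : ∀ i' : Fin (t + 1), (∑ m, if h : (Fin.last t).1 < i'.1 then
        ((glue M d β p).2 i' m ⟨(Fin.last t).1, h⟩ : ℤ) else 0) = 0 := by
      intro i'
      refine Finset.sum_eq_zero fun m _ => ?_
      rw [dif_neg]
      simp only [Fin.val_last]
      omega
    rw [hCond]
    simp only [Finset.sum_congr rfl fun i' _ => h0 i', Finset.sum_const_zero, add_zero]
    simp [glue, Fin.snoc_last, Fin.val_last]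
  have hcast : ∀ i : Fin t, (Cond (Fin.castSucc i) ↔
      ((∑ m, (p.1 i m - ∑ j, (p.2 i m j : ℤ)))
        + (∑ i' : Fin t, ∑ m, if h : i.1 < i'.1 then (p.2 i' m ⟨i.1, h⟩ : ℤ) else 0)
        + E' (i.1 + 1)
      = -(n (i.1 + 1) : ℤ) - 1)) := by
    intro i
    rw [hCond]
    simp only [Fin.sum_univ_castSucc, glue, Fin.snoc_castSucc, Fin.snoc_last,
      Fin.coe_castSucc, Fin.val_last, hE', Nat.add_sub_cancel, i.isLt, dif_pos]
    constructor <;> intro h <;> omega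
  have hC : (∀ i : Fin (t + 1), Cond i) ↔
      ((∀ i : Fin t,
        (∑ m, (p.1 i m - ∑ j, (p.2 i m j : ℤ)))
          + (∑ i' : Fin t, ∑ m, if h : i.1 < i'.1 then (p.2 i' m ⟨i.1, h⟩ : ℤ) else 0)
          + E' (i.1 + 1)
        = -(n (i.1 + 1) : ℤ) - 1) ∧
       ((∑ m, (d m - ∑ j, (β m j : ℤ))) + E (t + 1) = -(n (t + 1) : ℤ) - 1)) := by
    rw [Fin.forall_fin_succ']
    exact and_congr (forall_congr' hcast) hlast
  rw [towerTerm, towerTerm]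
  by_cases h : ∀ i : Fin (t + 1), Cond i
  · rw [if_pos h, if_pos ((hC.mp h).2), if_pos ((hC.mp h).1)]
    rw [Fin.prod_univ_castSucc]
    rw [mul_comm]
    congr 1
    · refine Finset.prod_congr rfl fun i _ => ?_
      simp [glue, Fin.snoc_castSucc, Fin.coe_castSucc]
    · simp [glue, Fin.snoc_last, Fin.val_last]
  · rw [if_neg h]
    rcases not_and_or.mp (hC.not.mp h) with hB | hA
    · rw [if_neg hB, mul_zero]
    · rw [if_neg hA, zero_mul]

noncomputable def pushAllHom {R : ℕ → Type*} [∀ i, CommRing (R i)] (P : ∀ i, R (i + 1) →+ R i) :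
    ∀ n, R n →+ R 0
  | 0 => AddMonoidHom.id _
  | n + 1 => (pushAllHom P n).comp (P n)

lemma pushAll_eq {R : ℕ → Type*} [∀ i, CommRing (R i)] (P : ∀ i, R (i + 1) →+ R i) (n : ℕ) :
    pushAll P n = ⇑(pushAllHom P n) := by
  induction n with
  | zero => rfl
  | succ n ih => funext x; show pushAll P n (P n x) = _; rw [ih]; rfl

lemma pushAll_pull {R : ℕ → Type*} [∀ i, CommRing (R i)] (f : ∀ i, R i →+* R (i + 1))
    (P : ∀ i, R (i + 1) →+ R i)
    (hproj : ∀ i (a : R i) (b : R (i + 1)), P i (f i a * b) = a * P i b) :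
    ∀ t (r : R 0) (y : R t), pushAll P t (pullTo f t r * y) = r * pushAll P t y := by
  intro t
  induction t with
  | zero => intro r y; rfl
  | succ t ih =>
      intro r y
      show pushAll P t (P t (pullTo f (t+1) r * y)) = r * pushAll P t (P t y)
      have : pullTo f (t+1) r * y = f t (pullTo f t r) * y := rfl
      rw [this, hproj, ih]

lemma glue_injective {t : ℕ} (M : ℕ → Type) : Function.Injective
    (fun x : (((M (t + 1) → ℤ) × (M (t + 1) → Fin t → ℕ)) ×
        ((∀ i : Fin t, M (i.1 + 1) → ℤ) × (∀ i : Fin t, M (i.1 + 1) → Fin i.1 → ℕ))) =>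
      glue M x.1.1 x.1.2 x.2) := by
  rintro ⟨⟨d, β⟩, p⟩ ⟨⟨d', β'⟩, p'⟩ h
  simp only [glue, Prod.mk.injEq] at h
  obtain ⟨h1, h2⟩ := h
  have hd : d = d' := by
    have := congrFun h1 (Fin.last t)
    simpa [Fin.snoc_last] using this
  have hβ : β = β' := by
    have := congrFun h2 (Fin.last t)
    simpa [Fin.snoc_last] using this
  have hp1 : p.1 = p'.1 := by
    funext i
    have := congrFun h1 (Fin.castSucc i)
    simpa [Fin.snoc_castSucc] using this
  have hp2 : p.2 = p'.2 := by
    funext i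
    have := congrFun h2 (Fin.castSucc i)
    simpa [Fin.snoc_castSucc] using this
  simp [hd, hβ, Prod.ext_iff, hp1, hp2]

lemma glue_surj {t : ℕ} (M : ℕ → Type)
    (p' : (∀ i : Fin (t + 1), M (i.1 + 1) → ℤ) × (∀ i : Fin (t + 1), M (i.1 + 1) → Fin i.1 → ℕ)) :
    glue M (p'.1 (Fin.last t)) (p'.2 (Fin.last t))
      (fun i => p'.1 (Fin.castSucc i), fun i => p'.2 (Fin.castSucc i)) = p' := by
  unfold glue
  refine Prod.ext ?_ ?_
  · exact Fin.snoc_init_self p'.1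
  · exact Fin.snoc_init_self p'.2

theorem tower_main {k : ℕ}
    (R : ℕ → Type*) [∀ i, CommRing (R i)]
    (f : ∀ i, R i →+* R (i + 1))
    (P : ∀ i, R (i + 1) →+ R i)
    (hproj : ∀ i (a : R i) (b : R (i + 1)), P i (f i a * b) = a * P i b)
    (c : ℕ → ∀ n', R n')
    (hc : ∀ i' n', 1 ≤ i' → i' ≤ n' → n' < k → c i' (n' + 1) = f n' (c i' n'))
    (M : ℕ → Type) [∀ i, Fintype (M i)]
    (mv : ∀ i, M i → ℕ → ℤ)
    (q : ∀ i, M i → ℤ → R 0)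
    (hq : ∀ i, 1 ≤ i → i ≤ k → ∀ m : M i, ∃ D : ℤ, ∀ d : ℤ, D ≤ d → q i m d = 0)
    (hSegre : ∀ i, i < k → ∀ nn : ℕ,
      P i ((c (i + 1) (i + 1)) ^ nn) =
        ∑ᶠ db : (M (i + 1) → ℤ) × (M (i + 1) → ℕ),
          if (∑ m, (db.1 m - (db.2 m : ℤ))) = -(nn : ℤ) - 1 then
            ∏ m, (pullTo f i (q (i + 1) m (db.1 m)) *
              ((Ring.choose (db.1 m) (db.2 m) : ℤ) : R i) *
              (∑ j ∈ Finset.Icc 1 i, mv (i + 1) m j • c j i) ^ (db.2 m))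
          else 0)
    (n : ℕ → ℕ) :
    ∀ t, t ≤ k → ∀ e : ℕ → ℕ,
      ∃ s : Finset ((∀ i : Fin t, M (i.1 + 1) → ℤ) × (∀ i : Fin t, M (i.1 + 1) → Fin i.1 → ℕ)),
        (Function.support (towerTerm t M mv q (fun i => (e i : ℤ)) n) ⊆ ↑s) ∧
        pushAll P t (∏ i' ∈ Finset.Icc 1 t, c i' t ^ (n i' + e i')) =
          ∑ p ∈ s, towerTerm t M mv q (fun i => (e i : ℤ)) n p := by
  intro t
  induction t with
  | zero =>
      intro _ e
      refine ⟨{(fun i => i.elim0, fun i => i.elim0)}, ?_, ?_⟩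
      · intro p _
        simp only [Finset.coe_singleton, Set.mem_singleton_iff]
        exact Subsingleton.elim _ _
      · rw [Finset.sum_singleton]
        rw [show Finset.Icc 1 0 = (∅ : Finset ℕ) from Finset.Icc_eq_empty (by omega)]
        rw [Finset.prod_empty, towerTerm, if_pos (fun i => i.elim0)]
        simp
        rfl
  | succ t ih =>
      intro htk e
      have htk' : t < k := htk
      choose sF hsF1 hsF2 using ih (le_of_lt htk')
      set N : ℕ := n (t + 1) + e (t + 1) with hN
      obtain ⟨D, hD⟩ : ∃ D : M (t + 1) → ℤ, ∀ m d, D m ≤ d → q (t + 1) m d = 0 := by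
        choose D hD using hq (t + 1) (by omega) (by omega)
        exact ⟨D, hD⟩
      set X : ℤ := ∑ m, max 0 (D m) with hX
      have hX0 : ∀ m0 : M (t + 1), max 0 (D m0) ≤ X := by
        intro m0
        exact Finset.single_le_sum (fun m _ => le_max_left 0 (D m)) (Finset.mem_univ m0)
      set lo : ℤ := -(N : ℤ) - 1 - X with hlo
      set Bn : ℕ := (X + X + (N : ℤ) + 1).toNat + 1 with hBn
      set s₀ : Finset ((M (t + 1) → ℤ) × (M (t + 1) → ℕ)) :=
        (Fintype.piFinset fun m => Finset.Icc lo (D m - 1)) ×ˢ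
          (Fintype.piFinset fun m => Finset.range Bn) with hs₀
      have mem_s₀ : ∀ (d : M (t + 1) → ℤ) (b : M (t + 1) → ℕ),
          (∑ m, (d m - (b m : ℤ)) = -(N : ℤ) - 1) → (∀ m, d m ≤ D m - 1) →
          (d, b) ∈ s₀ := by
        intro d b hcond hdlt
        have herase : ∀ m0 : M (t + 1),
            ∑ m ∈ Finset.univ.erase m0, (d m - (b m : ℤ)) + (d m0 - (b m0 : ℤ))
              = -(N : ℤ) - 1 := by
          intro m0
          rw [Finset.sum_erase_add _ _ (Finset.mem_univ m0)]
          exact hcond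
        have hbound : ∀ m0 : M (t + 1),
            ∑ m ∈ Finset.univ.erase m0, (d m - (b m : ℤ)) ≤ X := by
          intro m0
          calc ∑ m ∈ Finset.univ.erase m0, (d m - (b m : ℤ))
              ≤ ∑ m ∈ Finset.univ.erase m0, max 0 (D m) := by
                refine Finset.sum_le_sum fun m _ => ?_
                have h1 := hdlt m
                have h2 := le_max_right 0 (D m)
                have h3 : (0 : ℤ) ≤ (b m : ℤ) := Int.natCast_nonneg _
                omega
            _ ≤ X := Finset.sum_le_sum_of_subset_of_nonneg
                (Finset.erase_subset _ _) (fun m _ _ => le_max_left 0 (D m))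
        rw [hs₀, Finset.mem_product]
        constructor
        · rw [Fintype.mem_piFinset]
          intro m0
          rw [Finset.mem_Icc]
          show lo ≤ d m0 ∧ d m0 ≤ D m0 - 1
          have h1 := herase m0
          have h2 := hbound m0
          have h3 := hdlt m0
          have h4 : (0 : ℤ) ≤ (b m0 : ℤ) := Int.natCast_nonneg _
          omega
        · rw [Fintype.mem_piFinset]
          intro m0
          rw [Finset.mem_range]
          show b m0 < Bn
          have h1 := herase m0
          have h2 := hbound m0
          have h3 := hdlt m0
          have h4 := hX0 m0
          have h5 := le_max_right 0 (D m0)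
          omega
      set g : (M (t + 1) → ℤ) × (M (t + 1) → ℕ) → R t := fun db =>
        if (∑ m, (db.1 m - (db.2 m : ℤ))) = -(N : ℤ) - 1 then
          ∏ m, (pullTo f t (q (t + 1) m (db.1 m)) *
            ((Ring.choose (db.1 m) (db.2 m) : ℤ) : R t) *
            (∑ j ∈ Finset.Icc 1 t, mv (t + 1) m j • c j t) ^ (db.2 m))
        else 0 with hg
      have hgsupp : Function.support g ⊆ ↑s₀ := by
        intro db hdb
        simp only [Function.mem_support] at hdb
        have hcond : (∑ m, (db.1 m - (db.2 m : ℤ))) = -(N : ℤ) - 1 := by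
          by_contra hc0
          exact hdb (by rw [hg]; exact if_neg hc0)
        have hdlt : ∀ m, db.1 m ≤ D m - 1 := by
          intro m0
          by_contra hge
          push_neg at hge
          refine hdb ?_
          rw [hg]
          simp only [if_pos hcond]
          refine Finset.prod_eq_zero (Finset.mem_univ m0) ?_
          rw [hD m0 _ (by omega), map_zero, zero_mul, zero_mul]
        exact mem_s₀ _ _ hcond hdlt
      have hseg : P t (c (t + 1) (t + 1) ^ N) = ∑ db ∈ s₀, g db := by
        rw [hSegre t htk' N]
        exact finsum_eq_sum_of_support_subset _ hgsupp
      set CC : (M (t + 1) → ℤ) × (M (t + 1) → Fin t → ℕ) → R 0 := fun dβ =>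
        if (∑ m, (dβ.1 m - ∑ j, (dβ.2 m j : ℤ))) + (e (t + 1) : ℤ)
            = -(n (t + 1) : ℤ) - 1 then
          ∏ m, q (t + 1) m (dβ.1 m) *
            ((genMultinomial (dβ.1 m) (dβ.2 m) *
                ∏ j : Fin t, mv (t + 1) m (j.1 + 1) ^ dβ.2 m j : ℤ) : R 0)
        else 0 with hCC
      set efun : (M (t + 1) → Fin t → ℕ) → ℕ → ℕ := fun β i =>
        e i + if h : i - 1 < t then ∑ m, β m ⟨i - 1, h⟩ else 0 with hefun
      have hper : ∀ db ∈ s₀, pushAll P t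
          ((∏ i' ∈ Finset.Icc 1 t, c i' t ^ (n i' + e i')) * g db) =
          ∑ β ∈ Fintype.piFinset (fun m => Finset.piAntidiag Finset.univ (db.2 m)),
            CC (db.1, β) * pushAll P t
              (∏ i' ∈ Finset.Icc 1 t, c i' t ^ (n i' + efun β i')) := by
        intro db hdb
        have hcondiff : ∀ β ∈ Fintype.piFinset
              (fun m : M (t + 1) => Finset.piAntidiag (Finset.univ : Finset (Fin t)) (db.2 m)),
            (((∑ m, (db.1 m - ∑ j, (β m j : ℤ))) + (e (t + 1) : ℤ)
              = -(n (t + 1) : ℤ) - 1) ↔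
            ((∑ m, (db.1 m - (db.2 m : ℤ))) = -(N : ℤ) - 1)) := by
          intro β hβ
          have hb : ∀ m, (∑ j, (β m j : ℤ)) = (db.2 m : ℤ) := by
            intro m
            rw [← Nat.cast_sum]
            norm_cast
            exact ((Finset.mem_piAntidiag).1 (Fintype.mem_piFinset.1 hβ m)).1
          rw [Finset.sum_congr rfl fun m _ => by rw [hb m]]
          rw [hN]
          push_cast
          constructor <;> intro <;> omega
        by_cases hcond : (∑ m, (db.1 m - (db.2 m : ℤ))) = -(N : ℤ) - 1
        · -- main case
          have hb : ∀ β ∈ Fintype.piFinset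
                (fun m : M (t + 1) => Finset.piAntidiag (Finset.univ : Finset (Fin t)) (db.2 m)),
              ∀ m, (∑ j, β m j) = db.2 m := by
            intro β hβ m
            exact ((Finset.mem_piAntidiag).1 (Fintype.mem_piFinset.1 hβ m)).1
          have hgdb : g db =
              pullTo f t (∏ m, q (t + 1) m (db.1 m) *
                  ((Ring.choose (db.1 m) (db.2 m) : ℤ) : R 0)) *
                ∏ m, (∑ j ∈ Finset.Icc 1 t, mv (t + 1) m j • c j t) ^ db.2 m := by
            rw [hg]
            simp only [if_pos hcond]
            rw [map_prod, ← Finset.prod_mul_distrib]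
            refine Finset.prod_congr rfl fun m _ => ?_
            rw [map_mul, map_intCast]
          rw [hgdb, mul_left_comm, pushAll_pull f P hproj]
          have hW : (∏ m, (∑ j ∈ Finset.Icc 1 t, mv (t + 1) m j • c j t) ^ db.2 m)
              = ∑ β ∈ Fintype.piFinset (fun m => Finset.piAntidiag Finset.univ (db.2 m)),
                  ∏ m, ((Nat.multinomial Finset.univ (β m) : R t) *
                    ∏ j : Fin t,
                      (((mv (t + 1) m (j.1 + 1) : ℤ) : R t) * c (j.1 + 1) t) ^ β m j) := by
            have step1 : (∏ m, (∑ j ∈ Finset.Icc 1 t, mv (t + 1) m j • c j t) ^ db.2 m)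
                = ∏ m, ∑ βm ∈ Finset.piAntidiag (Finset.univ : Finset (Fin t)) (db.2 m),
                    ((Nat.multinomial Finset.univ βm : R t) *
                      ∏ j : Fin t,
                        (((mv (t + 1) m (j.1 + 1) : ℤ) : R t) * c (j.1 + 1) t) ^ βm j) := by
              refine Finset.prod_congr rfl fun m _ => ?_
              have hSm : (∑ j ∈ Finset.Icc 1 t, mv (t + 1) m j • c j t)
                  = ∑ j : Fin t, ((mv (t + 1) m (j.1 + 1) : ℤ) : R t) * c (j.1 + 1) t := by
                rw [sumIccFin]
                exact Finset.sum_congr rfl fun j _ => zsmul_eq_mul _ _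
              rw [hSm, Finset.sum_pow_eq_sum_piAntidiag]
            rw [step1, Finset.prod_univ_sum]
          rw [hW, Finset.mul_sum, pushAll_eq, map_sum, ← pushAll_eq, Finset.mul_sum]
          refine Finset.sum_congr rfl fun β hβ => ?_
          have hbm := hb β hβ
          -- factor the coefficient out of the product over m
          have hfac : (∏ m, ((Nat.multinomial Finset.univ (β m) : R t) *
                ∏ j : Fin t,
                  (((mv (t + 1) m (j.1 + 1) : ℤ) : R t) * c (j.1 + 1) t) ^ β m j))
              = pullTo f t
                  (((∏ m, ((Nat.multinomial Finset.univ (β m) : ℤ) *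
                    ∏ j : Fin t, mv (t + 1) m (j.1 + 1) ^ β m j)) : ℤ) : R 0) *
                ∏ m, ∏ j : Fin t, c (j.1 + 1) t ^ β m j := by
            rw [map_intCast]
            push_cast
            rw [← Finset.prod_mul_distrib]
            refine Finset.prod_congr rfl fun m _ => ?_
            rw [mul_assoc, ← Finset.prod_mul_distrib]
            congr 1
            exact Finset.prod_congr rfl fun j _ => mul_pow _ _ _
          rw [hfac, mul_left_comm, pushAll_pull f P hproj]
          have haW : (∏ i' ∈ Finset.Icc 1 t, c i' t ^ (n i' + e i')) *
              ∏ m, ∏ j : Fin t, c (j.1 + 1) t ^ β m j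
              = ∏ i' ∈ Finset.Icc 1 t, c i' t ^ (n i' + efun β i') := by
            rw [Finset.prod_comm]
            rw [Finset.prod_congr rfl fun j (_ : j ∈ Finset.univ) =>
              Finset.prod_pow_eq_pow_sum Finset.univ _ _]
            rw [prodIccFin t (fun i' => c i' t ^ (n i' + e i')),
              prodIccFin t (fun i' => c i' t ^ (n i' + efun β i')),
              ← Finset.prod_mul_distrib]
            refine Finset.prod_congr rfl fun j _ => ?_
            rw [← pow_add]
            congr 1
            rw [hefun]
            simp only [Nat.add_sub_cancel, j.isLt, dif_pos, Fin.eta]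
            omega
          rw [haW, ← mul_assoc]
          congr 1
          rw [hCC]
          simp only
          rw [if_pos ((hcondiff β hβ).2 hcond)]
          push_cast
          rw [← Finset.prod_mul_distrib]
          refine Finset.prod_congr rfl fun m _ => ?_
          rw [genMultinomial, hbm m]
          push_cast
          ring
        · -- vanishing case
          have hgz : g db = 0 := by rw [hg]; exact if_neg hcond
          rw [hgz, mul_zero, pushAll_eq, map_zero]
          symm
          refine Finset.sum_eq_zero fun β hβ => ?_
          rw [hCC]
          simp only
          rw [if_neg fun hcc => hcond ((hcondiff β hβ).1 hcc), zero_mul]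
      -- the sigma finset over (d, b) and compatible β
      set sig₀ : Finset (Σ _ : (M (t + 1) → ℤ) × (M (t + 1) → ℕ),
          (M (t + 1) → Fin t → ℕ)) :=
        s₀.sigma (fun db => Fintype.piFinset
          (fun m : M (t + 1) => Finset.piAntidiag (Finset.univ : Finset (Fin t)) (db.2 m)))
        with hsig₀
      set S₁ : Finset ((M (t + 1) → ℤ) × (M (t + 1) → Fin t → ℕ)) :=
        sig₀.image (fun x => (x.1.1, x.2)) with hS₁
      have hinj1 : ∀ x ∈ sig₀, ∀ y ∈ sig₀,
          (x.1.1, x.2) = (y.1.1, y.2) → x = y := by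
        intro x hx y hy hxy
        rw [hsig₀, Finset.mem_sigma] at hx hy
        have h1 : x.1.1 = y.1.1 := (Prod.ext_iff.1 hxy).1
        have h2 : x.2 = y.2 := (Prod.ext_iff.1 hxy).2
        have h3 : x.1.2 = y.1.2 := by
          funext m
          have hxm := (Finset.mem_piAntidiag.1 (Fintype.mem_piFinset.1 hx.2 m)).1
          have hym := (Finset.mem_piAntidiag.1 (Fintype.mem_piFinset.1 hy.2 m)).1
          rw [← hxm, ← hym, h2]
        refine Sigma.ext ?_ (heq_of_eq h2)
        exact Prod.ext h1 h3
      have key : pushAll P (t + 1)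
          (∏ i' ∈ Finset.Icc 1 (t + 1), c i' (t + 1) ^ (n i' + e i'))
          = ∑ x ∈ sig₀, CC (x.1.1, x.2) * pushAll P t
              (∏ i' ∈ Finset.Icc 1 t, c i' t ^ (n i' + efun x.2 i')) := by
        have h1 : (∏ i' ∈ Finset.Icc 1 (t + 1), c i' (t + 1) ^ (n i' + e i'))
            = f t (∏ i' ∈ Finset.Icc 1 t, c i' t ^ (n i' + e i')) *
                c (t + 1) (t + 1) ^ N := by
          rw [Finset.prod_Icc_succ_top (by omega : 1 ≤ t + 1), map_prod]
          congr 1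
          refine Finset.prod_congr rfl fun i' hi' => ?_
          rw [Finset.mem_Icc] at hi'
          rw [hc i' t hi'.1 hi'.2 htk', map_pow]
        rw [h1]
        show pushAll P t (P t _) = _
        rw [hproj, hseg, Finset.mul_sum, pushAll_eq, map_sum, ← pushAll_eq]
        rw [Finset.sum_congr rfl hper, hsig₀, Finset.sum_sigma']
      -- pass to the image finset
      have key2 : (∑ x ∈ sig₀, CC (x.1.1, x.2) * pushAll P t
              (∏ i' ∈ Finset.Icc 1 t, c i' t ^ (n i' + efun x.2 i')))
          = ∑ dβ ∈ S₁, CC dβ * pushAll P t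
              (∏ i' ∈ Finset.Icc 1 t, c i' t ^ (n i' + efun dβ.2 i')) := by
        rw [hS₁]
        exact (Finset.sum_image (f := fun dβ => CC dβ * pushAll P t
          (∏ i' ∈ Finset.Icc 1 t, c i' t ^ (n i' + efun dβ.2 i'))) hinj1).symm
      have hefuncast : ∀ β₀ : M (t + 1) → Fin t → ℕ,
          (fun i => ((efun β₀ i : ℕ) : ℤ)) =
          (fun i => ((e i : ℕ) : ℤ) +
            if h : i - 1 < t then (∑ m, (β₀ m ⟨i - 1, h⟩ : ℤ)) else 0) := by
        intro β₀
        funext i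
        simp only [hefun]
        by_cases h : i - 1 < t
        · rw [dif_pos h, dif_pos h]
          push_cast
          ring
        · rw [dif_neg h, dif_neg h]
          push_cast
          ring
      have key3 : ∀ dβ : (M (t + 1) → ℤ) × (M (t + 1) → Fin t → ℕ),
          CC dβ * pushAll P t
              (∏ i' ∈ Finset.Icc 1 t, c i' t ^ (n i' + efun dβ.2 i'))
          = ∑ p ∈ sF (efun dβ.2),
              towerTerm (t + 1) M mv q (fun i => (e i : ℤ)) n (glue M dβ.1 dβ.2 p) := by
        intro dβ
        rw [hsF2 (efun dβ.2), Finset.mul_sum]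
        refine Finset.sum_congr rfl fun p _ => ?_
        rw [towerTerm_glue, hefuncast dβ.2]
      set sFinal : Finset ((∀ i : Fin (t + 1), M (i.1 + 1) → ℤ) ×
          (∀ i : Fin (t + 1), M (i.1 + 1) → Fin i.1 → ℕ)) :=
        (S₁.sigma (fun dβ => sF (efun dβ.2))).image
          (fun y => glue M y.1.1 y.1.2 y.2) with hsFinal
      have hinj2 : ∀ x ∈ S₁.sigma (fun dβ => sF (efun dβ.2)),
          ∀ y ∈ S₁.sigma (fun dβ => sF (efun dβ.2)),
          glue M x.1.1 x.1.2 x.2 = glue M y.1.1 y.1.2 y.2 → x = y := by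
        intro x _ y _ h
        have := glue_injective M (a₁ := (x.1, x.2)) (a₂ := (y.1, y.2)) h
        refine Sigma.ext (congrArg Prod.fst this) (heq_of_eq (congrArg Prod.snd this))
      have key4 : (∑ dβ ∈ S₁, ∑ p ∈ sF (efun dβ.2),
            towerTerm (t + 1) M mv q (fun i => (e i : ℤ)) n (glue M dβ.1 dβ.2 p))
          = ∑ p' ∈ sFinal, towerTerm (t + 1) M mv q (fun i => (e i : ℤ)) n p' := by
        rw [Finset.sum_sigma', hsFinal]
        exact (Finset.sum_image hinj2).symm
      refine ⟨sFinal, ?_, ?_⟩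
      · -- support
        intro p' hp'
        rw [Function.mem_support] at hp'
        have hdec := glue_surj M p'
        rw [← hdec, towerTerm_glue] at hp'
        have hx := left_ne_zero_of_mul hp'
        have hy := right_ne_zero_of_mul hp'
        set d₀ : M (t + 1) → ℤ := p'.1 (Fin.last t) with hd₀
        set β₀ : M (t + 1) → Fin t → ℕ := p'.2 (Fin.last t) with hβ₀
        have hcond0 : (∑ m, (d₀ m - ∑ j, (β₀ m j : ℤ))) + ((e (t + 1) : ℕ) : ℤ)
            = -(n (t + 1) : ℤ) - 1 := by
          by_contra hc0
          exact hx (if_neg hc0)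
        have hdlt : ∀ m, d₀ m ≤ D m - 1 := by
          intro m0
          by_contra hge
          push_neg at hge
          refine hx ?_
          rw [if_pos hcond0]
          refine Finset.prod_eq_zero (Finset.mem_univ m0) ?_
          rw [hD m0 _ (by omega), zero_mul]
        refine Finset.mem_coe.2 (Finset.mem_image.2 ⟨⟨(d₀, β₀),
          (fun i => p'.1 (Fin.castSucc i), fun i => p'.2 (Fin.castSucc i))⟩, ?_, hdec⟩)
        rw [Finset.mem_sigma]
        constructor
        · rw [hS₁]
          refine Finset.mem_image.2 ⟨⟨(d₀, fun m => ∑ j, β₀ m j), β₀⟩, ?_, rfl⟩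
          rw [hsig₀, Finset.mem_sigma]
          constructor
          · refine mem_s₀ _ _ ?_ hdlt
            have hcast : ∀ m : M (t + 1), ((∑ j, β₀ m j : ℕ) : ℤ) = ∑ j, (β₀ m j : ℤ) := by
              intro m; push_cast; rfl
            rw [Finset.sum_congr rfl fun m _ => by rw [hcast m]]
            rw [hN]
            push_cast
            omega
          · exact Fintype.mem_piFinset.2 fun m =>
              Finset.mem_piAntidiag.2 ⟨rfl, fun j _ => Finset.mem_univ j⟩
        · apply hsF1
          rw [Function.mem_support, hefuncast β₀]
          exact hy
      · -- the identity
        rw [key, key2, Finset.sum_congr rfl fun dβ _ => key3 dβ, key4]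

/-- **Theorem 2.1 of the paper** (full version with auxiliary variables), stated
coefficient-wise.  For each `1 ≤ i ≤ k`, `A i` is a finite set and `na i u` a nonnegative
integer for each `u : A i`; the class pushed forward is
`Π_{i=1}^k c_i^{n_i + Σ_{u ∈ A_i} n_{i,u}}`, and the constraint of the truncation acquires the
extra summand `Σ_{u ∈ A_i} n_{i,u}`, coming from extracting the coefficient of
`Π_i u_i^{-n_i-1} Π_{u ∈ A_i} u^{-n_{i,u}-1}` in
`π_* Π_i ((u_i - c_i)^{-1} Π_{u ∈ A_i} (u - c_i)^{-1}) =
[Π_i Π_{m ∈ M_i} Q_m(u_i + m^{i-1}u_{i-1} + ⋯ + m^1 u_1) Π_{u ∈ A_i} (u - u_i)^{-1}]_-`.  A formal push-forward tower consists of commutative rings `R 0, …, R k`,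
pull-backs `f`, push-forwards `P` satisfying the projection formula, and tautological classes:
`c i' n'` denotes the image in `R n'` of the tautological class `c_{i'} ∈ R_{i'}` (for
`1 ≤ i' ≤ n' ≤ k`), these images being compatible under pull-back and nilpotent.  The Segre
data consists of finite index sets `M`, integer vectors `mv` and Laurent coefficients `q`
(vanishing in large degrees) of the series `Q_m`; the Segre assumption `hSegre` says that
`P_{i+1}(c_{i+1}^n)` is the coefficient of `u^{-n-1}` in
`Π_{m ∈ M_{i+1}} Q_m(u + m^i c_i + ⋯ + m^1 c_1)`, each `Q_m` expanded in non-negative powers of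
the nilpotent element `m^i c_i + ⋯ + m^1 c_1`.  The conclusion: only finitely many tuples
contribute a nonzero term, and `(P_1 ∘ ⋯ ∘ P_k)(c_1^{n_1} ⋯ c_k^{n_k})` equals the sum of all
the terms, i.e. the coefficient of `u_1^{-n_1-1} ⋯ u_k^{-n_k-1}` in
`[Π_{i=1}^k Π_{m ∈ M_i} Q_m(u_i + m^{i-1} u_{i-1} + ⋯ + m^1 u_1)]_-`. -/
theorem pushforward_tower_full
    {k : ℕ} (hk : 1 ≤ k)
    (R : ℕ → Type*) [∀ i, CommRing (R i)]
    (f : ∀ i, R i →+* R (i + 1))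
    (P : ∀ i, R (i + 1) →+ R i)
    (hproj : ∀ i (a : R i) (b : R (i + 1)), P i (f i a * b) = a * P i b)
    (c : ℕ → ∀ n', R n')
    (hc : ∀ i' n', 1 ≤ i' → i' ≤ n' → n' < k → c i' (n' + 1) = f n' (c i' n'))
    (hnil : ∀ i' n', 1 ≤ i' → i' ≤ n' → n' ≤ k → IsNilpotent (c i' n'))
    (M : ℕ → Type) [∀ i, Fintype (M i)]
    (mv : ∀ i, M i → ℕ → ℤ)
    (q : ∀ i, M i → ℤ → R 0)
    (hq : ∀ i, 1 ≤ i → i ≤ k → ∀ m : M i, ∃ D : ℤ, ∀ d : ℤ, D ≤ d → q i m d = 0)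
    (A : ℕ → Type) [∀ i, Fintype (A i)]
    (na : ∀ i, A i → ℕ)
    (hSegre : ∀ i, i < k → ∀ n : ℕ,
      P i ((c (i + 1) (i + 1)) ^ n) =
        ∑ᶠ db : (M (i + 1) → ℤ) × (M (i + 1) → ℕ),
          if (∑ m, (db.1 m - (db.2 m : ℤ))) = -(n : ℤ) - 1 then
            ∏ m, (pullTo f i (q (i + 1) m (db.1 m)) *
              ((Ring.choose (db.1 m) (db.2 m) : ℤ) : R i) *
              (∑ j ∈ Finset.Icc 1 i, mv (i + 1) m j • c j i) ^ (db.2 m))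
          else 0)
    (n : ℕ → ℕ) :
    (Function.support (towerTerm k M mv q (fun i => ∑ u : A i, (na i u : ℤ)) n)).Finite ∧
    pushAll P k (∏ i' ∈ Finset.Icc 1 k, c i' k ^ (n i' + ∑ u : A i', na i' u)) =
      ∑ᶠ p, towerTerm k M mv q (fun i => ∑ u : A i, (na i u : ℤ)) n p := by
  obtain ⟨s, hsub, heq⟩ := tower_main (k := k) R f P hproj c hc M mv q hq hSegre n k
    le_rfl (fun i => ∑ u : A i, na i u)
  have hextra : (fun i : ℕ => ∑ u : A i, (na i u : ℤ))
      = (fun i : ℕ => ((∑ u : A i, na i u : ℕ) : ℤ)) := by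
    funext i
    push_cast
    rfl
  rw [hextra]
  exact ⟨Set.Finite.subset s.finite_toSet hsub,
    by rw [heq, finsum_eq_sum_of_support_subset _ hsub]⟩
end

section
/- Main push-forward formula for projective towers (formula (1.5), i.e. Theorem 2.1 with all auxiliary sets A_i empty, stated coefficient-wise): Let a formal push-forward tower with Segre data satisfy the Segre assumption. Then for all nonnegative integers n_1, …, n_k, the element (P_1 ∘ P_2 ∘ ⋯ ∘ P_k)( c_1^{n_1} c_2^{n_2} ⋯ c_k^{n_k} ) of R_0 equals the sum, over all tuples of integers (d_{i,m})_{1 ≤ i ≤ k, m ∈ M_i} and vectors (β_{i,m})_{1 ≤ i ≤ k, m ∈ M_i} with β_{i,m} ∈ ℕ^{i−1}, subject to the constraints that for every i one has Σ_{m ∈ M_i} (d_{i,m} − |β_{i,m}|) + Σ_{i' > i} Σ_{m ∈ M_{i'}} β^{i}_{i',m} = −n_i − 1, of the products Π_{i=1}^{k} Π_{m ∈ M_i} q_{m, d_{i,m}} · C(d_{i,m}, β_{i,m}) · Π_{j=1}^{i−1} (m^j)^{β^j_{i,m}}; moreover only finitely many tuples contribute a nonzero term. This is the coefficient-wise form of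 the identity s(π, u_1, …, u_k) = π_*( (u_1 − c_1)^{−1} ⋯ (u_k − c_k)^{−1} ) = [ Π_{i=1}^{k} Π_{m ∈ M_i} Q_m(u_i + m^{i−1} u_{i−1} + ⋯ + m^1 u_1) ]_−, where each Q_m is expanded in non-negative powers of u_1, …, u_{i−1} and [⋯]_− keeps only monomials in which every variable u_1, …, u_k has negative exponent. -/
open scoped Classical

/-! ### Auxiliary machinery -/

section Tower

variable {k : ℕ} {R : ℕ → Type*} [∀ i, CommRing (R i)]
  (f : ∀ i, R i →+* R (i + 1)) (P : ∀ i, R (i + 1) →+ R i)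
  (c : ℕ → ∀ n', R n')
  (M : ℕ → Type) [∀ i, Fintype (M i)]
  (mv : ∀ i, M i → ℕ → ℤ) (q : ∀ i, M i → ℤ → R 0) (n : ℕ → ℕ)

/-- The index type of the big sum. -/
abbrev TIdx (k : ℕ) (M : ℕ → Type) :=
  (∀ i : Fin k, M (i.1 + 1) → ℤ) × (∀ i : Fin k, M (i.1 + 1) → Fin i.1 → ℕ)

/-- The factor of the coefficient attached to level `i+1`. -/
noncomputable def slotT (i : Fin k) (d : M (i.1 + 1) → ℤ) (b : M (i.1 + 1) → Fin i.1 → ℕ) :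
    R 0 :=
  ∏ m, q (i.1 + 1) m (d m) *
    ((genMultinomial (d m) (b m) * ∏ j : Fin i.1, mv (i.1 + 1) m (j.1 + 1) ^ b m j : ℤ) : R 0)

/-- The constraint at level `i+1`. -/
def cstr (p : TIdx k M) (i : Fin k) : Prop :=
  (∑ m, (p.1 i m - ∑ j, (p.2 i m j : ℤ)))
    + (∑ i' : Fin k, ∑ m, if h : i.1 < i'.1 then (p.2 i' m ⟨i.1, h⟩ : ℤ) else 0)
    = -(n (i.1 + 1) : ℤ) - 1

/-- Product of the coefficient factors at levels `> t`. -/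
noncomputable def coefGe (t : ℕ) (p : TIdx k M) : R 0 :=
  ∏ i : Fin k, if t ≤ i.1 then slotT M mv q i (p.1 i) (p.2 i) else 1

/-- Accumulated extra exponent of `c (jv+1)` coming from the slots at levels `> t`. -/
def addB (t : ℕ) (jv : ℕ) (p : TIdx k M) : ℕ :=
  ∑ i : Fin k, ∑ m, if h : t ≤ i.1 ∧ jv < i.1 then p.2 i m ⟨jv, h.2⟩ else 0

/-- The indicator condition at level `t`. -/
def GGind (t : ℕ) (p : TIdx k M) : Prop :=
  (∀ i : Fin k, t ≤ i.1 → cstr M n p i) ∧ (∀ i : Fin k, i.1 < t → p.1 i = 0 ∧ p.2 i = 0)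

/-- The partially pushed-forward term at level `t`. -/
noncomputable def GG (t : ℕ) (p : TIdx k M) : R t :=
  if GGind M n t p then
    pullTo f t (coefGe M mv q t p) *
      ∏ j : Fin t, c (j.1 + 1) t ^ (n (j.1 + 1) + addB M t j.1 p)
  else 0

/-- The summand in the Segre assumption. -/
noncomputable def segT (t : ℕ) (E : ℕ) (db : (M (t + 1) → ℤ) × (M (t + 1) → ℕ)) : R t :=
  if (∑ m, (db.1 m - (db.2 m : ℤ))) = -(E : ℤ) - 1 then
    ∏ m, (pullTo f t (q (t + 1) m (db.1 m)) *
      ((Ring.choose (db.1 m) (db.2 m) : ℤ) : R t) *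
      (∑ j ∈ Finset.Icc 1 t, mv (t + 1) m j • c j t) ^ (db.2 m))
  else 0

end Tower

section Lemmas

variable {k : ℕ} {R : ℕ → Type*} [∀ i, CommRing (R i)]
  (f : ∀ i, R i →+* R (i + 1)) (P : ∀ i, R (i + 1) →+ R i)
  (c : ℕ → ∀ n', R n')
  (M : ℕ → Type) [∀ i, Fintype (M i)]
  (mv : ∀ i, M i → ℕ → ℤ) (q : ∀ i, M i → ℤ → R 0) (n : ℕ → ℕ)

theorem prod_Icc_one_eq_fin {β : Type*} [CommMonoid β] (t : ℕ) (g : ℕ → β) :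
    ∏ j ∈ Finset.Icc 1 t, g j = ∏ j : Fin t, g (j.1 + 1) := by
  induction t with
  | zero => simp
  | succ t ih =>
      rw [Finset.prod_Icc_succ_top (by omega), ih, Fin.prod_univ_castSucc]
      rfl

theorem sum_Icc_one_eq_fin {β : Type*} [AddCommMonoid β] (t : ℕ) (g : ℕ → β) :
    ∑ j ∈ Finset.Icc 1 t, g j = ∑ j : Fin t, g (j.1 + 1) := by
  induction t with
  | zero => simp
  | succ t ih =>
      rw [Finset.sum_Icc_succ_top (by omega), ih, Fin.sum_univ_castSucc]
      rfl

/-- Bounds on the support of `GG`. -/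
theorem GG_bounds
    (hq : ∀ i : Fin k, ∀ m : M (i.1 + 1), ∃ D : ℤ, ∀ d : ℤ, D ≤ d → q (i.1 + 1) m d = 0)
    (t : ℕ) :
    ∃ (L U : ℤ) (B : ℕ), L ≤ 0 ∧ 0 ≤ U ∧ ∀ p : TIdx k M, GG f c M mv q n t p ≠ 0 →
      (∀ i m, L ≤ p.1 i m ∧ p.1 i m ≤ U) ∧ (∀ i m j, p.2 i m j ≤ B) := by
  choose U hU using hq
  set C : ℤ := ∑ i : Fin k, ((∑ m, |U i m|) + ((n (i.1 + 1) : ℤ) + 1)) with hCdef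
  have hC0 : (0 : ℤ) ≤ C := Finset.sum_nonneg fun i _ => by positivity
  set Bz : ℤ := C * (k + 1) ^ k with hBzdef
  have hBz0 : (0 : ℤ) ≤ Bz := by positivity
  set A : ℤ := ∑ i : Fin k, ∑ m, |U i m| with hAdef
  have hA0 : (0 : ℤ) ≤ A := Finset.sum_nonneg fun i _ => Finset.sum_nonneg fun m _ => abs_nonneg _
  set N : ℤ := ∑ i : Fin k, ((n (i.1 + 1) : ℤ) + 1) with hNdef
  have hN0 : (0 : ℤ) ≤ N := Finset.sum_nonneg fun i _ => by positivity
  have hkBz : (0 : ℤ) ≤ (k : ℤ) * Bz := by positivity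
  refine ⟨-(N + k * Bz + A), A, Bz.toNat, by linarith, hA0, ?_⟩
  intro p hp
  unfold GG GGind at hp
  split at hp
  case isFalse => exact absurd rfl hp
  case isTrue hind =>
  obtain ⟨hcs, hz⟩ := hind
  have hcoef : coefGe M mv q t p ≠ 0 := by
    intro h
    apply hp
    rw [h, map_zero, zero_mul]
  have hqne : ∀ i : Fin k, t ≤ i.1 → ∀ m, q (i.1 + 1) m (p.1 i m) ≠ 0 := by
    intro i hi m hqe
    apply hcoef
    unfold coefGe
    apply Finset.prod_eq_zero (Finset.mem_univ i)
    rw [if_pos hi]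
    unfold slotT
    apply Finset.prod_eq_zero (Finset.mem_univ m)
    rw [hqe, zero_mul]
  have hdU : ∀ i : Fin k, t ≤ i.1 → ∀ m, p.1 i m < U i m := by
    intro i hi m
    by_contra h
    exact hqne i hi m (hU i m _ (by omega))
  have hdabs : ∀ i : Fin k, t ≤ i.1 → ∀ m, p.1 i m ≤ |U i m| := fun i hi m =>
    le_trans (by have := hdU i hi m; omega) (le_abs_self _)
  have hkey : ∀ i : Fin k, t ≤ i.1 → ∑ m, ∑ j, (p.2 i m j : ℤ)
      = (∑ m, p.1 i m)
        + (∑ i' : Fin k, ∑ m, if h : i.1 < i'.1 then (p.2 i' m ⟨i.1, h⟩ : ℤ) else 0)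
        + ((n (i.1 + 1) : ℤ) + 1) := by
    intro i hi
    have h1 := hcs i hi
    unfold cstr at h1
    rw [Finset.sum_sub_distrib] at h1
    linarith
  have hsumU : ∀ i : Fin k, t ≤ i.1 → ∑ m, p.1 i m ≤ ∑ m, |U i m| := fun i hi =>
    Finset.sum_le_sum fun m _ => hdabs i hi m
  have hCi : ∀ i : Fin k, (∑ m, |U i m|) + ((n (i.1 + 1) : ℤ) + 1) ≤ C :=
    fun i => Finset.single_le_sum (f := fun i : Fin k =>
      (∑ m, |U i m|) + ((n (i.1 + 1) : ℤ) + 1)) (fun i' _ => by positivity) (Finset.mem_univ i)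
  have hmain : ∀ s : ℕ, ∀ i : Fin k, t ≤ i.1 → k ≤ i.1 + s →
      ∑ m, ∑ j, (p.2 i m j : ℤ) ≤ C * (k + 1) ^ s := by
    intro s
    induction s with
    | zero => intro i hi hk; exact absurd hk (by omega)
    | succ s ih =>
      intro i hi hk
      rw [hkey i hi]
      have h2 : (∑ i' : Fin k, ∑ m, if h : i.1 < i'.1 then (p.2 i' m ⟨i.1, h⟩ : ℤ) else 0)
          ≤ ∑ _i' : Fin k, C * (k + 1) ^ s := by
        apply Finset.sum_le_sum
        intro i' _
        by_cases h : i.1 < i'.1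
        · simp only [dif_pos h]
          refine le_trans (Finset.sum_le_sum fun m _ =>
            Finset.single_le_sum (f := fun j => (p.2 i' m j : ℤ))
              (fun j _ => Int.natCast_nonneg _) (Finset.mem_univ (⟨i.1, h⟩ : Fin i'.1))) ?_
          exact ih i' (by omega) (by omega)
        · simp only [dif_neg h, Finset.sum_const_zero]
          positivity
      have h3 : ∑ _i' : Fin k, C * (k + 1) ^ s = k * (C * (k + 1) ^ s) := by
        rw [Finset.sum_const, Finset.card_univ, Fintype.card_fin, nsmul_eq_mul]
      have h4 : C ≤ C * (k + 1) ^ s := le_mul_of_one_le_right hC0 (one_le_pow₀ (by omega))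
      have h5 : C * (k + 1) ^ (s + 1) = C * (k + 1) ^ s + k * (C * (k + 1) ^ s) := by ring
      have := hCi i
      have := hsumU i hi
      linarith
  have hβ : ∀ i : Fin k, t ≤ i.1 → ∑ m, ∑ j, (p.2 i m j : ℤ) ≤ Bz := fun i hi =>
    hmain k i hi (by omega)
  have hβc : ∀ i m j, (p.2 i m j : ℤ) ≤ Bz := by
    intro i m j
    by_cases hi : t ≤ i.1
    · have h1 : (p.2 i m j : ℤ) ≤ ∑ j', (p.2 i m j' : ℤ) :=
        Finset.single_le_sum (fun j' _ => Int.natCast_nonneg _) (Finset.mem_univ j)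
      have h2 : ∑ j', (p.2 i m j' : ℤ) ≤ ∑ m', ∑ j', (p.2 i m' j' : ℤ) :=
        Finset.single_le_sum (f := fun m' => ∑ j', (p.2 i m' j' : ℤ))
          (fun m' _ => Finset.sum_nonneg fun j' _ => Int.natCast_nonneg _) (Finset.mem_univ m)
      linarith [hβ i hi]
    · rw [(hz i (by omega)).2]
      simpa using hBz0
  have hcross : ∀ i : Fin k, t ≤ i.1 →
      (0 : ℤ) ≤ (∑ i' : Fin k, ∑ m, if h : i.1 < i'.1 then (p.2 i' m ⟨i.1, h⟩ : ℤ) else 0)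
      ∧ (∑ i' : Fin k, ∑ m, if h : i.1 < i'.1 then (p.2 i' m ⟨i.1, h⟩ : ℤ) else 0) ≤ k * Bz := by
    intro i hi
    constructor
    · apply Finset.sum_nonneg
      intro i' _
      apply Finset.sum_nonneg
      intro m _
      by_cases h : i.1 < i'.1
      · simp only [dif_pos h]; exact Int.natCast_nonneg _
      · simp only [dif_neg h]; exact le_refl 0
    · have h1 : (∑ i' : Fin k, ∑ m, if h : i.1 < i'.1 then (p.2 i' m ⟨i.1, h⟩ : ℤ) else 0)
          ≤ ∑ _i' : Fin k, Bz := by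
        apply Finset.sum_le_sum
        intro i' _
        by_cases h : i.1 < i'.1
        · simp only [dif_pos h]
          refine le_trans (Finset.sum_le_sum fun m _ =>
            Finset.single_le_sum (f := fun j => (p.2 i' m j : ℤ))
              (fun j _ => Int.natCast_nonneg _) (Finset.mem_univ (⟨i.1, h⟩ : Fin i'.1))) ?_
          exact hβ i' (by omega)
        · simp only [dif_neg h, Finset.sum_const_zero]; exact hBz0
      rw [Finset.sum_const, Finset.card_univ, Fintype.card_fin, nsmul_eq_mul] at h1
      exact h1
  refine ⟨?_, fun i m j => by have := hβc i m j; omega⟩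
  intro i m
  by_cases hi : t ≤ i.1
  · constructor
    · have h1 : p.1 i m = (∑ m', p.1 i m') - ∑ m' ∈ Finset.univ.erase m, p.1 i m' := by
        rw [← Finset.sum_erase_add Finset.univ (p.1 i) (Finset.mem_univ m)]; ring
      have h2 : ∑ m' ∈ Finset.univ.erase m, p.1 i m' ≤ ∑ m' ∈ Finset.univ.erase m, |U i m'| :=
        Finset.sum_le_sum fun m' _ => hdabs i hi m'
      have h3 : ∑ m' ∈ Finset.univ.erase m, |U i m'| ≤ ∑ m', |U i m'| :=
        Finset.sum_le_sum_of_subset_of_nonneg (Finset.subset_univ _) fun m' _ _ => abs_nonneg _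
      have h4 : ∑ m', |U i m'| ≤ A :=
        Finset.single_le_sum (f := fun i : Fin k => ∑ m, |U i m|)
          (fun i' _ => Finset.sum_nonneg fun m' _ => abs_nonneg _) (Finset.mem_univ i)
      have h5 : (0 : ℤ) ≤ ∑ m', ∑ j, (p.2 i m' j : ℤ) :=
        Finset.sum_nonneg fun m' _ => Finset.sum_nonneg fun j _ => Int.natCast_nonneg _
      have h6 : ((n (i.1 + 1) : ℤ) + 1) ≤ N :=
        Finset.single_le_sum (f := fun i : Fin k => ((n (i.1 + 1) : ℤ) + 1))
          (fun i' _ => by positivity) (Finset.mem_univ i)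
      have h7 := hkey i hi
      have h8 := (hcross i hi).2
      linarith
    · have h1 : p.1 i m ≤ |U i m| := hdabs i hi m
      have h2 : |U i m| ≤ ∑ m', |U i m'| :=
        Finset.single_le_sum (f := fun m' => |U i m'|) (fun m' _ => abs_nonneg _)
          (Finset.mem_univ m)
      have h4 : ∑ m', |U i m'| ≤ A :=
        Finset.single_le_sum (f := fun i : Fin k => ∑ m, |U i m|)
          (fun i' _ => Finset.sum_nonneg fun m' _ => abs_nonneg _) (Finset.mem_univ i)
      linarith
  · have h0 : p.1 i m = 0 := by rw [(hz i (by omega)).1]; rfl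
    rw [h0]
    constructor
    · have : (0:ℤ) ≤ k * Bz := by positivity
      linarith
    · exact hA0

theorem finite_TIdx (L U : ℤ) (B : ℕ) :
    {p : TIdx k M | (∀ i m, L ≤ p.1 i m ∧ p.1 i m ≤ U) ∧ (∀ i m j, p.2 i m j ≤ B)}.Finite := by
  have h1 : {p : TIdx k M | (∀ i m, L ≤ p.1 i m ∧ p.1 i m ≤ U) ∧ (∀ i m j, p.2 i m j ≤ B)} ⊆
      (Set.pi Set.univ fun i : Fin k => Set.pi Set.univ fun _ : M (i.1+1) => Set.Icc L U) ×ˢ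
      (Set.pi Set.univ fun i : Fin k => Set.pi Set.univ fun _ : M (i.1+1) =>
        Set.pi Set.univ fun _ : Fin i.1 => Set.Iic B) := by
    rintro p ⟨h1, h2⟩
    constructor
    · intro i _; intro m _; exact ⟨(h1 i m).1, (h1 i m).2⟩
    · intro i _; intro m _; intro j _; exact h2 i m j
  exact Set.Finite.subset
    (Set.Finite.prod
      (Set.Finite.pi fun i => Set.Finite.pi fun m => Set.finite_Icc _ _)
      (Set.Finite.pi fun i => Set.Finite.pi fun m => Set.Finite.pi fun j => Set.finite_Iic _))
    h1

theorem GG_support_finite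
    (hq : ∀ i : Fin k, ∀ m : M (i.1 + 1), ∃ D : ℤ, ∀ d : ℤ, D ≤ d → q (i.1 + 1) m d = 0)
    (t : ℕ) : (Function.support (GG (k := k) f c M mv q n t)).Finite := by
  obtain ⟨L, U, B, hL, hU, h⟩ := GG_bounds f c M mv q n hq t
  exact (finite_TIdx M L U B).subset fun p hp => (h p hp)

theorem finite_DB (M' : Type) [Fintype M'] (L U : ℤ) (B : ℕ) :
    {db : (M' → ℤ) × (M' → ℕ) | (∀ m, L ≤ db.1 m ∧ db.1 m ≤ U) ∧ ∀ m, db.2 m ≤ B}.Finite := by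
  have h1 : {db : (M' → ℤ) × (M' → ℕ) | (∀ m, L ≤ db.1 m ∧ db.1 m ≤ U) ∧ ∀ m, db.2 m ≤ B} ⊆
      (Set.pi Set.univ fun _ : M' => Set.Icc L U) ×ˢ
      (Set.pi Set.univ fun _ : M' => Set.Iic B) := by
    rintro db ⟨h1, h2⟩
    exact ⟨fun m _ => ⟨(h1 m).1, (h1 m).2⟩, fun m _ => h2 m⟩
  exact Set.Finite.subset
    (Set.Finite.prod (Set.Finite.pi fun _ => Set.finite_Icc _ _)
      (Set.Finite.pi fun _ => Set.finite_Iic _)) h1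

/-- Bounds on the support of `segT`, hence finiteness. -/
theorem segT_support_finite (t E : ℕ)
    (hq : ∀ m : M (t + 1), ∃ D : ℤ, ∀ d : ℤ, D ≤ d → q (t + 1) m d = 0) :
    (Function.support (segT f c M mv q t E)).Finite := by
  choose U hU using hq
  set A : ℤ := (∑ m, |U m|) + (E + 1) with hA
  have hAnn : (0 : ℤ) ≤ ∑ m, |U m| := Finset.sum_nonneg fun m _ => abs_nonneg _
  have hA0 : (0 : ℤ) ≤ A := by positivity
  refine (finite_DB (M (t + 1)) (-A) A A.toNat).subset ?_
  intro db hdb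
  have hne : segT f c M mv q t E db ≠ 0 := hdb
  unfold segT at hne
  split at hne
  case isFalse => exact absurd rfl hne
  case isTrue hcond =>
  have hqne : ∀ m, q (t + 1) m (db.1 m) ≠ 0 := by
    intro m hm
    apply hne
    apply Finset.prod_eq_zero (Finset.mem_univ m)
    rw [hm, map_zero, zero_mul, zero_mul]
  have hdU : ∀ m, db.1 m < U m := by
    intro m
    by_contra h
    exact hqne m (hU m _ (by omega))
  rw [Finset.sum_sub_distrib] at hcond
  have hbnn : (0 : ℤ) ≤ ∑ m, (db.2 m : ℤ) := Finset.sum_nonneg fun m _ => Int.natCast_nonneg _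
  have hdup : ∀ m, db.1 m ≤ ∑ m', |U m'| := by
    intro m
    calc db.1 m ≤ |U m| := le_trans (by have := hdU m; omega) (le_abs_self _)
    _ ≤ ∑ m', |U m'| := Finset.single_le_sum (fun m' _ => abs_nonneg (U m')) (Finset.mem_univ m)
  have hsd : ∑ m, db.1 m = -(E : ℤ) - 1 + ∑ m, (db.2 m : ℤ) := by linarith
  constructor
  · intro m
    constructor
    · have h1 : db.1 m = (∑ m', db.1 m') - ∑ m' ∈ Finset.univ.erase m, db.1 m' := by
        rw [← Finset.sum_erase_add Finset.univ db.1 (Finset.mem_univ m)]; ring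
      have h2 : ∑ m' ∈ Finset.univ.erase m, db.1 m' ≤ ∑ m' ∈ Finset.univ.erase m, |U m'| :=
        Finset.sum_le_sum fun m' _ => le_trans (by have := hdU m'; omega) (le_abs_self _)
      have h3 : ∑ m' ∈ Finset.univ.erase m, |U m'| ≤ ∑ m', |U m'| :=
        Finset.sum_le_sum_of_subset_of_nonneg (Finset.subset_univ _)
          (fun m' _ _ => abs_nonneg _)
      have h4 : -(E : ℤ) - 1 ≤ ∑ m', db.1 m' := by linarith
      omega
    · have := hdup m; omega
  · intro m
    have h1 : (db.2 m : ℤ) ≤ ∑ m', (db.2 m' : ℤ) :=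
      Finset.single_le_sum (fun m' _ => Int.natCast_nonneg _) (Finset.mem_univ m)
    have h2 : ∑ m', (db.2 m' : ℤ) = (∑ m', db.1 m') + (E : ℤ) + 1 := by linarith
    have h3 : ∑ m', db.1 m' ≤ ∑ m', |U m'| :=
      Finset.sum_le_sum fun m' _ => le_trans (by have := hdU m'; omega) (le_abs_self _)
    omega

end Lemmas

section Main

variable {k : ℕ} {R : ℕ → Type*} [∀ i, CommRing (R i)]
  (f : ∀ i, R i →+* R (i + 1)) (P : ∀ i, R (i + 1) →+ R i)
  (c : ℕ → ∀ n', R n')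
  (M : ℕ → Type) [∀ i, Fintype (M i)]
  (mv : ∀ i, M i → ℕ → ℤ) (q : ∀ i, M i → ℤ → R 0) (n : ℕ → ℕ)

/-- Base case `t = k`. -/
theorem GG_base :
    ∑ᶠ p : TIdx k M, GG f c M mv q n k p = ∏ i' ∈ Finset.Icc 1 k, c i' k ^ n i' := by
  classical
  set p0 : TIdx k M := (fun _ _ => 0, fun _ _ _ => 0) with hp0
  have h1 : ∀ p : TIdx k M, p ≠ p0 → GG f c M mv q n k p = 0 := by
    intro p hne
    unfold GG GGind
    rw [if_neg]
    rintro ⟨-, hzz⟩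
    apply hne
    ext i m <;> try rfl
    · exact congrFun ((hzz i i.2).1) m
    · exact congrFun (congrFun ((hzz i i.2).2) _) _
  rw [finsum_eq_single _ p0 h1]
  unfold GG GGind
  rw [if_pos ⟨fun i hi => absurd hi (by omega), fun i _ => ⟨rfl, rfl⟩⟩]
  have h2 : coefGe M mv q k p0 = 1 := by
    unfold coefGe
    apply Finset.prod_eq_one
    intro i _
    rw [if_neg (by omega)]
  have h3 : ∀ j : Fin k, addB M k j.1 p0 = 0 := by
    intro j
    unfold addB
    apply Finset.sum_eq_zero
    intro i _
    apply Finset.sum_eq_zero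
    intro m _
    rw [dif_neg (by omega)]
  rw [h2, map_one, one_mul]
  rw [prod_Icc_one_eq_fin k (fun j => c j k ^ n j)]
  apply Finset.prod_congr rfl
  intro j _
  simp [h3 j]



/-- Insert data `(d, γ)` into slot `t` of the tuple `p`. -/
def cmbIdx (t : ℕ) (ht : t < k) (p : TIdx k M) (d : M (t + 1) → ℤ)
    (γ : M (t + 1) → Fin t → ℕ) : TIdx k M :=
  (Function.update p.1 ⟨t, ht⟩ d, Function.update p.2 ⟨t, ht⟩ γ)

/-- Zero out slot `t` of the tuple `p`. -/
def zSlot (t : ℕ) (ht : t < k) (p : TIdx k M) : TIdx k M :=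
  (Function.update p.1 ⟨t, ht⟩ 0, Function.update p.2 ⟨t, ht⟩ 0)

/-- The exponent of `c (t+1)` accumulated at level `t+1`. -/
def Eexp (t : ℕ) (p : TIdx k M) : ℕ := n (t + 1) + addB M (t + 1) t p

section CmbLemmas

variable {t : ℕ} (ht : t < k) (p : TIdx k M) (d : M (t + 1) → ℤ)
  (γ : M (t + 1) → Fin t → ℕ)

theorem cmbIdx_fst_ne {i : Fin k} (hne : i ≠ ⟨t, ht⟩) :
    (cmbIdx M t ht p d γ).1 i = p.1 i := Function.update_of_ne hne _ _

theorem cmbIdx_snd_ne {i : Fin k} (hne : i ≠ ⟨t, ht⟩) :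
    (cmbIdx M t ht p d γ).2 i = p.2 i := Function.update_of_ne hne _ _

theorem cmbIdx_fst_self : (cmbIdx M t ht p d γ).1 ⟨t, ht⟩ = d := Function.update_self _ _ _

theorem cmbIdx_snd_self : (cmbIdx M t ht p d γ).2 ⟨t, ht⟩ = γ := Function.update_self _ _ _

theorem zSlot_fst_ne {i : Fin k} (hne : i ≠ ⟨t, ht⟩) :
    (zSlot M t ht p).1 i = p.1 i := Function.update_of_ne hne _ _

theorem zSlot_snd_ne {i : Fin k} (hne : i ≠ ⟨t, ht⟩) :
    (zSlot M t ht p).2 i = p.2 i := Function.update_of_ne hne _ _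

theorem zSlot_fst_self : (zSlot M t ht p).1 ⟨t, ht⟩ = 0 := Function.update_self _ _ _

theorem zSlot_snd_self : (zSlot M t ht p).2 ⟨t, ht⟩ = 0 := Function.update_self _ _ _

theorem ne_mk_of_lt {i : Fin k} (h : t < i.1) : i ≠ ⟨t, ht⟩ := by
  intro he
  have : i.1 = t := by rw [he]
  omega

theorem ne_mk_of_gt {i : Fin k} (h : i.1 < t) : i ≠ ⟨t, ht⟩ := by
  intro he
  have : i.1 = t := by rw [he]
  omega

theorem GG_ne_ind {p' : TIdx k M} {t' : ℕ} (h : GG f c M mv q n t' p' ≠ 0) :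
    GGind M n t' p' := by
  unfold GG at h
  split at h
  case isTrue hi => exact hi
  case isFalse => exact absurd rfl h

theorem cstr_cmb (i : Fin k) (hi : t < i.1) :
    cstr M n (cmbIdx M t ht p d γ) i ↔ cstr M n p i := by
  have hne : i ≠ ⟨t, ht⟩ := ne_mk_of_lt ht hi
  unfold cstr
  rw [cmbIdx_fst_ne M ht p d γ hne]
  have hcr : (∑ i' : Fin k, ∑ m, if h : i.1 < i'.1 then
        ((cmbIdx M t ht p d γ).2 i' m ⟨i.1, h⟩ : ℤ) else 0)
      = ∑ i' : Fin k, ∑ m, if h : i.1 < i'.1 then (p.2 i' m ⟨i.1, h⟩ : ℤ) else 0 := by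
    apply Finset.sum_congr rfl
    intro i' _
    by_cases h : i.1 < i'.1
    · rw [cmbIdx_snd_ne M ht p d γ (ne_mk_of_lt ht (by omega))]
    · simp only [dif_neg h]
  have hsnd : ∀ m : M (i.1 + 1), (∑ j, ((cmbIdx M t ht p d γ).2 i m j : ℤ))
      = ∑ j, (p.2 i m j : ℤ) := by
    intro m
    rw [cmbIdx_snd_ne M ht p d γ hne]
  rw [hcr]
  constructor <;> intro hh <;> rw [← hh] <;> congr 1 <;>
    exact (Finset.sum_congr rfl fun m _ => by rw [hsnd m]).symm

theorem cross_cmb :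
    (∑ i' : Fin k, ∑ m, if h : t < i'.1 then
        ((cmbIdx M t ht p d γ).2 i' m ⟨t, h⟩ : ℤ) else 0)
      = (addB M (t + 1) t p : ℤ) := by
  unfold addB
  rw [Nat.cast_sum]
  apply Finset.sum_congr rfl
  intro i' _
  rw [Nat.cast_sum]
  apply Finset.sum_congr rfl
  intro m _
  by_cases h : t < i'.1
  · rw [cmbIdx_snd_ne M ht p d γ (ne_mk_of_lt ht h), dif_pos h, dif_pos ⟨by omega, h⟩]
  · rw [dif_neg h, dif_neg (by omega), Nat.cast_zero]

theorem cstr_cmb_self :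
    cstr M n (cmbIdx M t ht p d γ) ⟨t, ht⟩ ↔
      (∑ m, (d m - ∑ j, (γ m j : ℤ))) + (addB M (t + 1) t p : ℤ)
        = -(n (t + 1) : ℤ) - 1 := by
  unfold cstr
  have hval : ((⟨t, ht⟩ : Fin k) : ℕ) = t := rfl
  simp only [hval]
  rw [cmbIdx_fst_self M ht p d γ, cmbIdx_snd_self M ht p d γ,
    cross_cmb M ht p d γ]

theorem GGind_cmb (pz : p.1 ⟨t, ht⟩ = 0 ∧ p.2 ⟨t, ht⟩ = 0) :
    GGind M n t (cmbIdx M t ht p d γ) ↔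
      GGind M n (t + 1) p ∧
        (∑ m, (d m - ∑ j, (γ m j : ℤ))) = -(Eexp M n t p : ℤ) - 1 := by
  have hE : (Eexp M n t p : ℤ) = (n (t + 1) : ℤ) + (addB M (t + 1) t p : ℤ) := by
    unfold Eexp; push_cast; ring
  unfold GGind
  constructor
  · rintro ⟨hcs, hz⟩
    refine ⟨⟨?_, ?_⟩, ?_⟩
    · intro i hi
      exact (cstr_cmb M n ht p d γ i (by omega)).1 (hcs i (by omega))
    · intro i hi
      by_cases h : i.1 < t
      · have hne : i ≠ ⟨t, ht⟩ := ne_mk_of_gt ht h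
        have h1 := hz i h
        rwa [cmbIdx_fst_ne M ht p d γ hne, cmbIdx_snd_ne M ht p d γ hne] at h1
      · have : i = (⟨t, ht⟩ : Fin k) := Fin.ext (show i.1 = t by omega)
        rw [this]; exact pz
    · have h1 := (cstr_cmb_self M n ht p d γ).1 (hcs ⟨t, ht⟩ (le_refl t))
      rw [hE]; linarith
  · rintro ⟨⟨hcs, hz⟩, hcond⟩
    constructor
    · intro i hi
      by_cases h : t < i.1
      · exact (cstr_cmb M n ht p d γ i h).2 (hcs i (by omega))
      · have : i = (⟨t, ht⟩ : Fin k) := Fin.ext (show i.1 = t by omega)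
        rw [this]
        apply (cstr_cmb_self M n ht p d γ).2
        rw [hE] at hcond; linarith
    · intro i hi
      have hne : i ≠ ⟨t, ht⟩ := ne_mk_of_gt ht hi
      have h1 := hz i (by omega)
      rw [cmbIdx_fst_ne M ht p d γ hne, cmbIdx_snd_ne M ht p d γ hne]
      exact h1

theorem coefGe_cmb :
    coefGe M mv q t (cmbIdx M t ht p d γ)
      = slotT M mv q ⟨t, ht⟩ d γ * coefGe M mv q (t + 1) p := by
  unfold coefGe
  rw [← Finset.mul_prod_erase Finset.univ _ (Finset.mem_univ (⟨t, ht⟩ : Fin k)),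
    ← Finset.mul_prod_erase Finset.univ
      (fun i => if t + 1 ≤ i.1 then slotT M mv q i (p.1 i) (p.2 i) else 1)
      (Finset.mem_univ (⟨t, ht⟩ : Fin k))]
  have hval : ((⟨t, ht⟩ : Fin k) : ℕ) = t := rfl
  simp only [hval]
  rw [if_pos (le_refl t), if_neg (by omega), one_mul,
    cmbIdx_fst_self M ht p d γ, cmbIdx_snd_self M ht p d γ]
  congr 1
  apply Finset.prod_congr rfl
  intro i hi
  have hne : i ≠ ⟨t, ht⟩ := (Finset.mem_erase.1 hi).1
  have hne' : i.1 ≠ t := fun h => hne (Fin.ext h)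
  rw [cmbIdx_fst_ne M ht p d γ hne, cmbIdx_snd_ne M ht p d γ hne]
  by_cases h : t + 1 ≤ i.1
  · rw [if_pos h, if_pos (by omega)]
  · rw [if_neg h, if_neg (by omega)]

theorem addB_cmb (jv : ℕ) (hjv : jv < t) :
    addB M t jv (cmbIdx M t ht p d γ)
      = addB M (t + 1) jv p + ∑ m, γ m ⟨jv, hjv⟩ := by
  unfold addB
  rw [← Finset.add_sum_erase Finset.univ _ (Finset.mem_univ (⟨t, ht⟩ : Fin k)),
    ← Finset.add_sum_erase Finset.univ
      (fun i => ∑ m, if h : t + 1 ≤ i.1 ∧ jv < i.1 then p.2 i m ⟨jv, h.2⟩ else 0)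
      (Finset.mem_univ (⟨t, ht⟩ : Fin k))]
  have hval : ((⟨t, ht⟩ : Fin k) : ℕ) = t := rfl
  simp only [hval]
  have h1 : (∑ m, if h : t ≤ t ∧ jv < t
      then (cmbIdx M t ht p d γ).2 ⟨t, ht⟩ m ⟨jv, h.2⟩ else 0) = ∑ m, γ m ⟨jv, hjv⟩ := by
    rw [cmbIdx_snd_self M ht p d γ]
    apply Finset.sum_congr rfl
    intro m _
    rw [dif_pos ⟨le_refl t, hjv⟩]
  have h2 : (∑ m : M (t + 1), if h : t + 1 ≤ t ∧ jv < t
      then p.2 ⟨t, ht⟩ m ⟨jv, h.2⟩ else 0) = 0 := by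
    apply Finset.sum_eq_zero
    intro m _
    rw [dif_neg (by omega)]
  rw [h1, h2, zero_add]
  have h3 : ∀ i ∈ Finset.univ.erase (⟨t, ht⟩ : Fin k),
      (∑ m, if h : t ≤ i.1 ∧ jv < i.1 then (cmbIdx M t ht p d γ).2 i m ⟨jv, h.2⟩ else 0)
        = ∑ m, if h : t + 1 ≤ i.1 ∧ jv < i.1 then p.2 i m ⟨jv, h.2⟩ else 0 := by
    intro i hi
    have hne : i ≠ ⟨t, ht⟩ := (Finset.mem_erase.1 hi).1
    have hne' : i.1 ≠ t := fun h => hne (Fin.ext h)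
    rw [cmbIdx_snd_ne M ht p d γ hne]
    apply Finset.sum_congr rfl
    intro m _
    by_cases h : t + 1 ≤ i.1 ∧ jv < i.1
    · rw [dif_pos h, dif_pos (⟨by omega, h.2⟩ : t ≤ i.1 ∧ jv < i.1)]
    · rw [dif_neg h, dif_neg (by omega)]
  rw [Finset.sum_congr rfl h3, add_comm]

end CmbLemmas


theorem seg_expand (t : ℕ) (ht : t < k) (db : (M (t + 1) → ℤ) × (M (t + 1) → ℕ)) :
    (∏ m, (pullTo f t (q (t + 1) m (db.1 m)) * ((Ring.choose (db.1 m) (db.2 m) : ℤ) : R t) *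
      (∑ j ∈ Finset.Icc 1 t, mv (t + 1) m j • c j t) ^ (db.2 m)))
    = ∑ γ ∈ Fintype.piFinset (fun m => Finset.piAntidiag Finset.univ (db.2 m)),
        pullTo f t (slotT M mv q ⟨t, ht⟩ db.1 γ) *
          ∏ j : Fin t, c (j.1 + 1) t ^ (∑ m, γ m j) := by
  have hpow : ∀ m, (∑ j ∈ Finset.Icc 1 t, mv (t + 1) m j • c j t) ^ (db.2 m)
      = ∑ γm ∈ Finset.piAntidiag Finset.univ (db.2 m),
          (Nat.multinomial Finset.univ γm : R t) *
            ∏ j : Fin t, (mv (t + 1) m (j.1 + 1) • c (j.1 + 1) t) ^ γm j := by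
    intro m
    rw [sum_Icc_one_eq_fin t (fun j => mv (t + 1) m j • c j t),
      Finset.sum_pow_eq_sum_piAntidiag]
  calc (∏ m, (pullTo f t (q (t + 1) m (db.1 m)) * ((Ring.choose (db.1 m) (db.2 m) : ℤ) : R t) *
        (∑ j ∈ Finset.Icc 1 t, mv (t + 1) m j • c j t) ^ (db.2 m)))
      = ∏ m, ∑ γm ∈ Finset.piAntidiag Finset.univ (db.2 m),
          pullTo f t (q (t + 1) m (db.1 m)) * ((Ring.choose (db.1 m) (db.2 m) : ℤ) : R t) *
            ((Nat.multinomial Finset.univ γm : R t) *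
              ∏ j : Fin t, (mv (t + 1) m (j.1 + 1) • c (j.1 + 1) t) ^ γm j) := by
        apply Finset.prod_congr rfl
        intro m _
        rw [hpow m, Finset.mul_sum]
    _ = ∑ γ ∈ Fintype.piFinset (fun m => Finset.piAntidiag Finset.univ (db.2 m)),
          ∏ m, (pullTo f t (q (t + 1) m (db.1 m)) * ((Ring.choose (db.1 m) (db.2 m) : ℤ) : R t) *
            ((Nat.multinomial Finset.univ (γ m) : R t) *
              ∏ j : Fin t, (mv (t + 1) m (j.1 + 1) • c (j.1 + 1) t) ^ γ m j)) := by
        rw [Finset.prod_univ_sum]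
    _ = ∑ γ ∈ Fintype.piFinset (fun m => Finset.piAntidiag Finset.univ (db.2 m)),
        pullTo f t (slotT M mv q ⟨t, ht⟩ db.1 γ) *
          ∏ j : Fin t, c (j.1 + 1) t ^ (∑ m, γ m j) := by
        apply Finset.sum_congr rfl
        intro γ hγ
        have hγm : ∀ m, ∑ j, γ m j = db.2 m := fun m =>
          (Finset.mem_piAntidiag.1 (Fintype.mem_piFinset.1 hγ m)).1
        have hslot : pullTo f t (slotT M mv q ⟨t, ht⟩ db.1 γ)
            = ∏ m, (pullTo f t (q (t + 1) m (db.1 m)) *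
                (((Ring.choose (db.1 m) (db.2 m) * Nat.multinomial Finset.univ (γ m)
                    * ∏ j : Fin t, mv (t + 1) m (j.1 + 1) ^ γ m j : ℤ)) : R t)) := by
          unfold slotT genMultinomial
          rw [map_prod]
          apply Finset.prod_congr rfl
          intro m _
          rw [map_mul, map_intCast, hγm m]
        have hterm : ∀ m, pullTo f t (q (t + 1) m (db.1 m)) *
              ((Ring.choose (db.1 m) (db.2 m) : ℤ) : R t) *
              ((Nat.multinomial Finset.univ (γ m) : R t) *
                ∏ j : Fin t, (mv (t + 1) m (j.1 + 1) • c (j.1 + 1) t) ^ γ m j)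
            = (pullTo f t (q (t + 1) m (db.1 m)) *
                (((Ring.choose (db.1 m) (db.2 m) * Nat.multinomial Finset.univ (γ m)
                    * ∏ j : Fin t, mv (t + 1) m (j.1 + 1) ^ γ m j : ℤ)) : R t))
              * ∏ j : Fin t, c (j.1 + 1) t ^ γ m j := by
          intro m
          have h1 : ∀ j : Fin t, (mv (t + 1) m (j.1 + 1) • c (j.1 + 1) t) ^ γ m j
              = ((mv (t + 1) m (j.1 + 1) ^ γ m j : ℤ) : R t) * c (j.1 + 1) t ^ γ m j := by
            intro j
            rw [smul_pow, zsmul_eq_mul]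
          rw [Finset.prod_congr rfl fun j _ => h1 j, Finset.prod_mul_distrib]
          push_cast
          ring
        rw [Finset.prod_congr rfl fun m _ => hterm m, Finset.prod_mul_distrib, hslot]
        congr 1
        rw [Finset.prod_comm]
        apply Finset.prod_congr rfl
        intro j _
        rw [Finset.prod_pow_eq_pow_sum]


theorem P_GG (t : ℕ) (ht : t < k)
    (hproj : ∀ i (a : R i) (b : R (i + 1)), P i (f i a * b) = a * P i b)
    (hc : ∀ i' n', 1 ≤ i' → i' ≤ n' → n' < k → c i' (n' + 1) = f n' (c i' n'))
    (p : TIdx k M) :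
    P t (GG f c M mv q n (t + 1) p)
      = if GGind M n (t + 1) p then
          pullTo f t (coefGe M mv q (t + 1) p) *
            (∏ j : Fin t, c (j.1 + 1) t ^ (n (j.1 + 1) + addB M (t + 1) j.1 p)) *
            P t (c (t + 1) (t + 1) ^ (Eexp M n t p))
        else 0 := by
  unfold GG
  split
  case isFalse => rw [map_zero]
  case isTrue hind =>
  set PA := pullTo f t (coefGe M mv q (t + 1) p) with hPA
  set B := ∏ j : Fin t, c (j.1 + 1) t ^ (n (j.1 + 1) + addB M (t + 1) j.1 p) with hB
  set CE := c (t + 1) (t + 1) ^ (Eexp M n t p) with hCE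
  have hmono : (∏ j : Fin (t + 1), c (j.1 + 1) (t + 1) ^ (n (j.1 + 1) + addB M (t + 1) j.1 p))
      = (∏ j : Fin t, c (j.1 + 1) (t + 1) ^ (n (j.1 + 1) + addB M (t + 1) j.1 p)) *
        c (t + 1) (t + 1) ^ (Eexp M n t p) := by
    rw [Fin.prod_univ_castSucc]
    rfl
  have h2 : (∏ j : Fin t, c (j.1 + 1) (t + 1) ^ (n (j.1 + 1) + addB M (t + 1) j.1 p))
      = f t B := by
    rw [hB, map_prod]
    apply Finset.prod_congr rfl
    intro j _
    rw [map_pow, hc (j.1 + 1) t (by omega) (by have := j.2; omega) ht]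
  have hpt : pullTo f (t + 1) (coefGe M mv q (t + 1) p) = f t PA := rfl
  rw [hmono, hpt, h2]
  rw [show f t PA * (f t B * CE) = f t (PA * B) * CE from by rw [map_mul]; ring,
    hproj t (PA * B) CE]

theorem per_db (t : ℕ) (ht : t < k) (p : TIdx k M)
    (pz : p.1 ⟨t, ht⟩ = 0 ∧ p.2 ⟨t, ht⟩ = 0) (db : (M (t + 1) → ℤ) × (M (t + 1) → ℕ)) :
    (∑ γ ∈ Fintype.piFinset (fun m => Finset.piAntidiag Finset.univ (db.2 m)),
        GG f c M mv q n t (cmbIdx M t ht p db.1 γ))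
      = if GGind M n (t + 1) p then
          pullTo f t (coefGe M mv q (t + 1) p) *
            (∏ j : Fin t, c (j.1 + 1) t ^ (n (j.1 + 1) + addB M (t + 1) j.1 p)) *
            segT f c M mv q t (Eexp M n t p) db
        else 0 := by
  have hterm : ∀ γ ∈ Fintype.piFinset (fun m => Finset.piAntidiag Finset.univ (db.2 m)),
      GG f c M mv q n t (cmbIdx M t ht p db.1 γ)
        = if GGind M n (t + 1) p ∧
            (∑ m, (db.1 m - (db.2 m : ℤ))) = -(Eexp M n t p : ℤ) - 1 then
            pullTo f t (coefGe M mv q (t + 1) p) *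
              (∏ j : Fin t, c (j.1 + 1) t ^ (n (j.1 + 1) + addB M (t + 1) j.1 p)) *
              (pullTo f t (slotT M mv q ⟨t, ht⟩ db.1 γ) *
                ∏ j : Fin t, c (j.1 + 1) t ^ (∑ m, γ m j))
          else 0 := by
    intro γ hγ
    have hγm : ∀ m, ∑ j, γ m j = db.2 m := fun m =>
      (Finset.mem_piAntidiag.1 (Fintype.mem_piFinset.1 hγ m)).1
    have hcondiff : (∑ m, (db.1 m - ∑ j, (γ m j : ℤ)))
        = ∑ m, (db.1 m - (db.2 m : ℤ)) := by
      apply Finset.sum_congr rfl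
      intro m _
      rw [← hγm m]
      push_cast
      ring
    have hiff : GGind M n t (cmbIdx M t ht p db.1 γ) ↔
        (GGind M n (t + 1) p ∧
          (∑ m, (db.1 m - (db.2 m : ℤ))) = -(Eexp M n t p : ℤ) - 1) :=
      (GGind_cmb M n ht p db.1 γ pz).trans (by rw [hcondiff])
    unfold GG
    by_cases hcnd : GGind M n (t + 1) p ∧
        (∑ m, (db.1 m - (db.2 m : ℤ))) = -(Eexp M n t p : ℤ) - 1
    · rw [if_pos (hiff.2 hcnd), if_pos hcnd]
      rw [coefGe_cmb M mv q ht p db.1 γ, map_mul]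
      have hmon : ∀ j : Fin t,
          c (j.1 + 1) t ^ (n (j.1 + 1) + addB M t j.1 (cmbIdx M t ht p db.1 γ))
            = c (j.1 + 1) t ^ (n (j.1 + 1) + addB M (t + 1) j.1 p) *
              c (j.1 + 1) t ^ (∑ m, γ m j) := by
        intro j
        rw [addB_cmb M ht p db.1 γ j.1 j.2, ← pow_add]
        congr 1
        have : (⟨j.1, j.2⟩ : Fin t) = j := rfl
        rw [this]
        ring
      rw [Finset.prod_congr rfl fun j _ => hmon j, Finset.prod_mul_distrib]
      ring
    · rw [if_neg (fun hcontra => hcnd (hiff.1 hcontra)), if_neg hcnd]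
  rw [Finset.sum_congr rfl hterm]
  by_cases hind : GGind M n (t + 1) p
  · by_cases hcond : (∑ m, (db.1 m - (db.2 m : ℤ))) = -(Eexp M n t p : ℤ) - 1
    · rw [if_pos hind]
      unfold segT
      rw [if_pos hcond, seg_expand f c M mv q t ht db, Finset.mul_sum]
      apply Finset.sum_congr rfl
      intro γ hγ
      rw [if_pos ⟨hind, hcond⟩]
    · rw [if_pos hind]
      unfold segT
      rw [if_neg hcond, mul_zero]
      apply Finset.sum_eq_zero
      intro γ hγ
      rw [if_neg (by tauto)]
  · rw [if_neg hind]
    apply Finset.sum_eq_zero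
    intro γ hγ
    rw [if_neg (by tauto)]

theorem key_step (t : ℕ) (ht : t < k)
    (hproj : ∀ i (a : R i) (b : R (i + 1)), P i (f i a * b) = a * P i b)
    (hc : ∀ i' n', 1 ≤ i' → i' ≤ n' → n' < k → c i' (n' + 1) = f n' (c i' n'))
    (hSegre : ∀ i, i < k → ∀ nn : ℕ,
      P i ((c (i + 1) (i + 1)) ^ nn) = ∑ᶠ db, segT f c M mv q i nn db)
    (p : TIdx k M) (pz : p.1 ⟨t, ht⟩ = 0 ∧ p.2 ⟨t, ht⟩ = 0)
    (T : Finset ((M (t + 1) → ℤ) × (M (t + 1) → ℕ)))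
    (hT : Function.support (segT f c M mv q t (Eexp M n t p)) ⊆ ↑T) :
    P t (GG f c M mv q n (t + 1) p)
      = ∑ db ∈ T, ∑ γ ∈ Fintype.piFinset (fun m => Finset.piAntidiag Finset.univ (db.2 m)),
          GG f c M mv q n t (cmbIdx M t ht p db.1 γ) := by
  rw [Finset.sum_congr rfl (fun db _ => per_db f c M mv q n t ht p pz db),
    P_GG f P c M mv q n t ht hproj hc p]
  by_cases hind : GGind M n (t + 1) p
  · simp only [if_pos hind]
    rw [← Finset.mul_sum]
    congr 1
    rw [← finsum_eq_finset_sum_of_support_subset _ hT, ← hSegre t ht (Eexp M n t p)]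
  · simp only [if_neg hind]
    rw [Finset.sum_const_zero]


theorem cmb_zSlot (t : ℕ) (ht : t < k) (p' : TIdx k M) :
    cmbIdx M t ht (zSlot M t ht p') (p'.1 ⟨t, ht⟩) (p'.2 ⟨t, ht⟩) = p' := by
  unfold cmbIdx zSlot
  refine Prod.ext ?_ ?_
  · show Function.update (Function.update p'.1 ⟨t, ht⟩ 0) ⟨t, ht⟩ (p'.1 ⟨t, ht⟩) = p'.1
    rw [Function.update_idem, Function.update_eq_self]
  · show Function.update (Function.update p'.2 ⟨t, ht⟩ 0) ⟨t, ht⟩ (p'.2 ⟨t, ht⟩) = p'.2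
    rw [Function.update_idem, Function.update_eq_self]

theorem zSlot_cmb (t : ℕ) (ht : t < k) (p : TIdx k M)
    (pz : p.1 ⟨t, ht⟩ = 0 ∧ p.2 ⟨t, ht⟩ = 0) (d : M (t + 1) → ℤ)
    (γ : M (t + 1) → Fin t → ℕ) :
    zSlot M t ht (cmbIdx M t ht p d γ) = p := by
  unfold cmbIdx zSlot
  refine Prod.ext ?_ ?_
  · show Function.update (Function.update p.1 ⟨t, ht⟩ d) ⟨t, ht⟩ 0 = p.1
    rw [Function.update_idem, ← pz.1, Function.update_eq_self]
  · show Function.update (Function.update p.2 ⟨t, ht⟩ γ) ⟨t, ht⟩ 0 = p.2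
    rw [Function.update_idem, ← pz.2, Function.update_eq_self]

/-- The inductive step. -/
theorem GG_step
    (hproj : ∀ i (a : R i) (b : R (i + 1)), P i (f i a * b) = a * P i b)
    (hc : ∀ i' n', 1 ≤ i' → i' ≤ n' → n' < k → c i' (n' + 1) = f n' (c i' n'))
    (hq : ∀ i : Fin k, ∀ m : M (i.1 + 1), ∃ D : ℤ, ∀ d : ℤ, D ≤ d → q (i.1 + 1) m d = 0)
    (hSegre : ∀ i, i < k → ∀ nn : ℕ,
      P i ((c (i + 1) (i + 1)) ^ nn) = ∑ᶠ db, segT f c M mv q i nn db)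
    (t : ℕ) (ht : t < k) :
    P t (∑ᶠ p : TIdx k M, GG f c M mv q n (t + 1) p)
      = ∑ᶠ p : TIdx k M, GG f c M mv q n t p := by
  classical
  have hq1 : ∀ m : M (t + 1), ∃ D : ℤ, ∀ d : ℤ, D ≤ d → q (t + 1) m d = 0 :=
    fun m => hq ⟨t, ht⟩ m
  have hfin1 := GG_support_finite f c M mv q n hq (t + 1)
  have hfin2 := GG_support_finite f c M mv q n hq t
  set S2 : Finset (TIdx k M) := hfin2.toFinset with hS2
  set Sp : Finset (TIdx k M) := hfin1.toFinset ∪ S2.image (zSlot M t ht) with hSpdef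
  have hSpz : ∀ p' ∈ Sp, p'.1 ⟨t, ht⟩ = 0 ∧ p'.2 ⟨t, ht⟩ = 0 := by
    intro p' hp'
    rcases Finset.mem_union.1 hp' with h | h
    · have h1 : GG f c M mv q n (t + 1) p' ≠ 0 := by
        have := hfin1.mem_toFinset.1 h
        exact this
      exact (GG_ne_ind f c M mv q n h1).2 ⟨t, ht⟩ (show t < t + 1 by omega)
    · obtain ⟨p'', hp'', rfl⟩ := Finset.mem_image.1 h
      exact ⟨zSlot_fst_self M ht p'', zSlot_snd_self M ht p''⟩
  set dbOf : TIdx k M → (M (t + 1) → ℤ) × (M (t + 1) → ℕ) :=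
    fun p' => (p'.1 ⟨t, ht⟩, fun m => ∑ j, p'.2 ⟨t, ht⟩ m j) with hdbOf
  set T : TIdx k M → Finset ((M (t + 1) → ℤ) × (M (t + 1) → ℕ)) :=
    fun p' => (segT_support_finite f c M mv q t (Eexp M n t p') hq1).toFinset ∪ S2.image dbOf
    with hTdef
  have hTsub : ∀ p' : TIdx k M,
      Function.support (segT f c M mv q t (Eexp M n t p')) ⊆ ↑(T p') := by
    intro p' x hx
    refine Finset.mem_coe.2 (Finset.mem_union_left _ ?_)
    exact (segT_support_finite f c M mv q t (Eexp M n t p') hq1).mem_toFinset.2 hx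
  calc P t (∑ᶠ p', GG f c M mv q n (t + 1) p')
      = ∑ p' ∈ hfin1.toFinset, P t (GG f c M mv q n (t + 1) p') := by
        rw [finsum_eq_sum _ hfin1, map_sum]
    _ = ∑ p' ∈ Sp, P t (GG f c M mv q n (t + 1) p') := by
        apply Finset.sum_subset Finset.subset_union_left
        intro p' _ hnot
        have hz : GG f c M mv q n (t + 1) p' = 0 := by
          by_contra hne
          exact hnot (hfin1.mem_toFinset.2 hne)
        rw [hz, map_zero]
    _ = ∑ p' ∈ Sp, ∑ db ∈ T p',
          ∑ γ ∈ Fintype.piFinset (fun m => Finset.piAntidiag Finset.univ (db.2 m)),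
            GG f c M mv q n t (cmbIdx M t ht p' db.1 γ) :=
        Finset.sum_congr rfl (fun p' hp' =>
          key_step f P c M mv q n t ht hproj hc hSegre p' (hSpz p' hp') (T p') (hTsub p'))
    _ = ∑ x ∈ Sp.sigma T,
          ∑ γ ∈ Fintype.piFinset (fun m => Finset.piAntidiag Finset.univ (x.2.2 m)),
            GG f c M mv q n t (cmbIdx M t ht x.1 x.2.1 γ) :=
        Finset.sum_sigma' Sp T _
    _ = ∑ y ∈ (Sp.sigma T).sigma
          (fun x => Fintype.piFinset (fun m => Finset.piAntidiag Finset.univ (x.2.2 m))),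
          GG f c M mv q n t (cmbIdx M t ht y.1.1 y.1.2.1 y.2) :=
        Finset.sum_sigma' (Sp.sigma T) _ _
    _ = ∑ p' ∈ S2, GG f c M mv q n t p' := by
        rw [← Finset.sum_filter_ne_zero ((Sp.sigma T).sigma
            (fun x => Fintype.piFinset (fun m => Finset.piAntidiag Finset.univ (x.2.2 m)))),
          ← Finset.sum_filter_ne_zero S2]
        refine Finset.sum_nbij'
          (i := fun y => cmbIdx M t ht y.1.1 y.1.2.1 y.2)
          (j := fun p' => ⟨⟨zSlot M t ht p', dbOf p'⟩, p'.2 ⟨t, ht⟩⟩)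
          ?_ ?_ ?_ ?_ ?_
        · rintro ⟨⟨p', db⟩, γ⟩ hy
          obtain ⟨hmem, hne⟩ := Finset.mem_filter.1 hy
          refine Finset.mem_filter.2 ⟨?_, hne⟩
          exact hfin2.mem_toFinset.2 hne
        · intro p' hp'
          obtain ⟨hp'S2, hp'ne⟩ := Finset.mem_filter.1 hp'
          refine Finset.mem_filter.2 ⟨?_, ?_⟩
          · refine Finset.mem_sigma.2 ⟨Finset.mem_sigma.2 ⟨?_, ?_⟩, ?_⟩
            · exact Finset.mem_union_right _ (Finset.mem_image.2 ⟨p', hp'S2, rfl⟩)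
            · exact Finset.mem_union_right _ (Finset.mem_image.2 ⟨p', hp'S2, rfl⟩)
            · refine Fintype.mem_piFinset.2 ?_
              intro m
              exact Finset.mem_piAntidiag.2 ⟨rfl, fun j _ => Finset.mem_univ j⟩
          · show GG f c M mv q n t
              (cmbIdx M t ht (zSlot M t ht p') (dbOf p').1 (p'.2 ⟨t, ht⟩)) ≠ 0
            have : (dbOf p').1 = p'.1 ⟨t, ht⟩ := rfl
            rw [this, cmb_zSlot M t ht p']
            exact hp'ne
        · rintro ⟨⟨p', db⟩, γ⟩ hy
          obtain ⟨hmem, hne⟩ := Finset.mem_filter.1 hy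
          obtain ⟨hx, hγ⟩ := Finset.mem_sigma.1 hmem
          obtain ⟨hp'Sp, hdbT⟩ := Finset.mem_sigma.1 hx
          have pz := hSpz p' hp'Sp
          have hγm : ∀ m, ∑ j, γ m j = db.2 m := fun m =>
            (Finset.mem_piAntidiag.1 (Fintype.mem_piFinset.1 hγ m)).1
          have h1 : zSlot M t ht (cmbIdx M t ht p' db.1 γ) = p' :=
            zSlot_cmb M t ht p' pz db.1 γ
          have h2 : dbOf (cmbIdx M t ht p' db.1 γ) = db := by
            rw [hdbOf]
            refine Prod.ext ?_ ?_
            · show (cmbIdx M t ht p' db.1 γ).1 ⟨t, ht⟩ = db.1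
              rw [cmbIdx_fst_self M ht p' db.1 γ]
            · show (fun m => ∑ j, (cmbIdx M t ht p' db.1 γ).2 ⟨t, ht⟩ m j) = db.2
              funext m
              rw [cmbIdx_snd_self M ht p' db.1 γ]
              exact hγm m
          have h3 : (cmbIdx M t ht p' db.1 γ).2 ⟨t, ht⟩ = γ :=
            cmbIdx_snd_self M ht p' db.1 γ
          show (⟨⟨zSlot M t ht (cmbIdx M t ht p' db.1 γ), dbOf (cmbIdx M t ht p' db.1 γ)⟩,
            (cmbIdx M t ht p' db.1 γ).2 ⟨t, ht⟩⟩ :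
              (x : (_ : TIdx k M) × ((M (t + 1) → ℤ) × (M (t + 1) → ℕ)))
                × (M (t + 1) → Fin t → ℕ)) = ⟨⟨p', db⟩, γ⟩
          rw [h1, h2, h3]
        · intro p' hp'
          show cmbIdx M t ht (zSlot M t ht p') (dbOf p').1 (p'.2 ⟨t, ht⟩) = p'
          have : (dbOf p').1 = p'.1 ⟨t, ht⟩ := rfl
          rw [this, cmb_zSlot M t ht p']
        · rintro ⟨⟨p', db⟩, γ⟩ hy
          rfl
    _ = ∑ᶠ p', GG f c M mv q n t p' := (finsum_eq_sum _ hfin2).symm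


theorem GG_assemble
    (hproj : ∀ i (a : R i) (b : R (i + 1)), P i (f i a * b) = a * P i b)
    (hc : ∀ i' n', 1 ≤ i' → i' ≤ n' → n' < k → c i' (n' + 1) = f n' (c i' n'))
    (hq : ∀ i : Fin k, ∀ m : M (i.1 + 1), ∃ D : ℤ, ∀ d : ℤ, D ≤ d → q (i.1 + 1) m d = 0)
    (hSegre : ∀ i, i < k → ∀ nn : ℕ,
      P i ((c (i + 1) (i + 1)) ^ nn) = ∑ᶠ db, segT f c M mv q i nn db) :
    ∀ s t, t + s = k →
      pushAll P k (∏ i' ∈ Finset.Icc 1 k, c i' k ^ n i')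
        = pushAll P t (∑ᶠ p : TIdx k M, GG f c M mv q n t p) := by
  intro s
  induction s with
  | zero =>
      intro t h
      have hk : t = k := by omega
      subst hk
      rw [GG_base]
  | succ s ih =>
      intro t h
      rw [ih (t + 1) (by omega)]
      show pushAll P t (P t (∑ᶠ p : TIdx k M, GG f c M mv q n (t + 1) p)) = _
      rw [GG_step f P c M mv q n hproj hc hq hSegre t (by omega)]

end Main

theorem GG_eq_towerTerm {k : ℕ} {R : ℕ → Type*} [∀ i, CommRing (R i)]
    (f : ∀ i, R i →+* R (i + 1)) (c : ℕ → ∀ n', R n')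
    (M : ℕ → Type) [∀ i, Fintype (M i)]
    (mv : ∀ i, M i → ℕ → ℤ) (q : ∀ i, M i → ℤ → R 0) (n : ℕ → ℕ) :
    GG f c M mv q n 0 = towerTerm k M mv q (fun _ => 0) n := by
  funext p
  have hiff : (GGind M n 0 p) ↔
      (∀ i : Fin k,
        (∑ m, (p.1 i m - ∑ j, (p.2 i m j : ℤ)))
          + (∑ i' : Fin k, ∑ m, if h : i.1 < i'.1 then (p.2 i' m ⟨i.1, h⟩ : ℤ) else 0)
          + (fun _ => (0 : ℤ)) (i.1 + 1)
        = -(n (i.1 + 1) : ℤ) - 1) := by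
    unfold GGind cstr
    constructor
    · rintro ⟨h, -⟩ i
      simpa using h i (Nat.zero_le _)
    · intro h
      exact ⟨fun i _ => by simpa using h i, fun i hi => absurd hi (by omega)⟩
  unfold GG towerTerm
  rw [if_congr hiff ?_ rfl]
  show pullTo f 0 (coefGe M mv q 0 p) * ∏ j : Fin 0, _ = _
  rw [show (∏ j : Fin 0, c (j.1 + 1) 0 ^ (n (j.1 + 1) + addB M 0 j.1 p)) = 1 from
    Finset.prod_of_isEmpty _]
  show coefGe M mv q 0 p * 1 = _
  rw [mul_one]
  unfold coefGe
  apply Finset.prod_congr rfl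
  intro i _
  rw [if_pos (Nat.zero_le _)]
  rfl

/-- **Formula (1.5) of the paper** (Theorem 2.1 with all auxiliary sets `A_i` empty), stated
coefficient-wise.  A formal push-forward tower consists of commutative rings `R 0, …, R k`,
pull-backs `f`, push-forwards `P` satisfying the projection formula, and tautological classes:
`c i' n'` denotes the image in `R n'` of the tautological class `c_{i'} ∈ R_{i'}` (for
`1 ≤ i' ≤ n' ≤ k`), these images being compatible under pull-back and nilpotent.  The Segre
data consists of finite index sets `M`, integer vectors `mv` and Laurent coefficients `q`
(vanishing in large degrees) of the series `Q_m`; the Segre assumption `hSegre` says that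
`P_{i+1}(c_{i+1}^n)` is the coefficient of `u^{-n-1}` in
`Π_{m ∈ M_{i+1}} Q_m(u + m^i c_i + ⋯ + m^1 c_1)`, each `Q_m` expanded in non-negative powers of
the nilpotent element `m^i c_i + ⋯ + m^1 c_1`.  The conclusion: only finitely many tuples
contribute a nonzero term, and `(P_1 ∘ ⋯ ∘ P_k)(c_1^{n_1} ⋯ c_k^{n_k})` equals the sum of all
the terms, i.e. the coefficient of `u_1^{-n_1-1} ⋯ u_k^{-n_k-1}` in
`[Π_{i=1}^k Π_{m ∈ M_i} Q_m(u_i + m^{i-1} u_{i-1} + ⋯ + m^1 u_1)]_-`. -/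
theorem pushforward_tower_main_formula
    {k : ℕ} (hk : 1 ≤ k)
    (R : ℕ → Type*) [∀ i, CommRing (R i)]
    (f : ∀ i, R i →+* R (i + 1))
    (P : ∀ i, R (i + 1) →+ R i)
    (hproj : ∀ i (a : R i) (b : R (i + 1)), P i (f i a * b) = a * P i b)
    (c : ℕ → ∀ n', R n')
    (hc : ∀ i' n', 1 ≤ i' → i' ≤ n' → n' < k → c i' (n' + 1) = f n' (c i' n'))
    (hnil : ∀ i' n', 1 ≤ i' → i' ≤ n' → n' ≤ k → IsNilpotent (c i' n'))
    (M : ℕ → Type) [∀ i, Fintype (M i)]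
    (mv : ∀ i, M i → ℕ → ℤ)
    (q : ∀ i, M i → ℤ → R 0)
    (hq : ∀ i, 1 ≤ i → i ≤ k → ∀ m : M i, ∃ D : ℤ, ∀ d : ℤ, D ≤ d → q i m d = 0)
    (hSegre : ∀ i, i < k → ∀ n : ℕ,
      P i ((c (i + 1) (i + 1)) ^ n) =
        ∑ᶠ db : (M (i + 1) → ℤ) × (M (i + 1) → ℕ),
          if (∑ m, (db.1 m - (db.2 m : ℤ))) = -(n : ℤ) - 1 then
            ∏ m, (pullTo f i (q (i + 1) m (db.1 m)) *
              ((Ring.choose (db.1 m) (db.2 m) : ℤ) : R i) *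
              (∑ j ∈ Finset.Icc 1 i, mv (i + 1) m j • c j i) ^ (db.2 m))
          else 0)
    (n : ℕ → ℕ) :
    (Function.support (towerTerm k M mv q (fun _ => 0) n)).Finite ∧
    pushAll P k (∏ i' ∈ Finset.Icc 1 k, c i' k ^ n i') =
      ∑ᶠ p, towerTerm k M mv q (fun _ => 0) n p := by
  have hq' : ∀ i : Fin k, ∀ m : M (i.1 + 1), ∃ D : ℤ, ∀ d : ℤ, D ≤ d → q (i.1 + 1) m d = 0 :=
    fun i m => hq (i.1 + 1) (by omega) (by have := i.2; omega) m
  have hSeg' : ∀ i, i < k → ∀ nn : ℕ,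
      P i ((c (i + 1) (i + 1)) ^ nn) = ∑ᶠ db, segT f c M mv q i nn db := by
    intro i hi nn
    rw [hSegre i hi nn]
    rfl
  have hG0 := GG_eq_towerTerm (k := k) f c M mv q n
  constructor
  · rw [← hG0]
    exact GG_support_finite f c M mv q n hq' 0
  · rw [GG_assemble f P c M mv q n hproj hc hq' hSeg' k 0 (by omega)]
    show (∑ᶠ p : TIdx k M, GG f c M mv q n 0 p) = _
    rw [hG0]
end

section
/- Inductive step of the proof of Theorem 2.1 (the identity Z_j = Z_{j−1}, equation (2.2), in single-step algebraic form): Let R and R' be commutative rings, f : R → R' a ring homomorphism, P : R' → R an additive map satisfying the projection formula P(f(a)·b) = a·P(b) for all a ∈ R, b ∈ R', and let c ∈ R' be nilpotent. Suppose s_n ∈ R (n ≥ 0) are elements with P(c^n) = s_n for all n ≥ 0 (the coefficients of the Segre series of P). Let T be a finite index set and, for each t ∈ T, let m_t ∈ ℤ and let a_{t,d} ∈ R (d ∈ ℤ) be coefficients with a_{t,d} = 0 for all sufficiently large d (encoding a Laurent series F_t(v) = Σ_d a_{t,d} v^d). Let A be a finite set with nonnegative integers n_u for u ∈ A. Then for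 every nonnegative integer n and all integers (e_t)_{t ∈ T}: P( c^{ n + Σ_{u ∈ A} n_u } · Π_{t ∈ T} ( Σ_{β ≥ 0} f(a_{t, e_t + β}) · C(e_t + β, β) · m_t^{β} · c^{β} ) ) = Σ_{(β_t)_{t ∈ T} ∈ ℕ^T} s_{ n + Σ_{u ∈ A} n_u + Σ_{t ∈ T} β_t } · Π_{t ∈ T} a_{t, e_t + β_t} · C(e_t + β_t, β_t) · m_t^{β_t}, where all sums have only finitely many nonzero terms. (The inner factor Σ_{β ≥ 0} a_{t, e_t + β} C(e_t + β, β) m_t^{β} c^{β} is the coefficient of v_t^{e_t} in F_t(v_t + m_t c), expanded in non-negative powers of c; the identity expresses that push-forward along one step of the tower replaces c by the formal variable u_j, multiplies by the Segre series of that step, and commutes with the truncation [⋯]_−.) -/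
/-- **The inductive step `Z_j = Z_{j-1}` (equation (2.2)) of the proof of Theorem 2.1**, in
single-step algebraic form.  Here `P : R' →+ R` abstracts the push-forward `π^j_*` (an additive
map satisfying the projection formula `hproj`), `c` abstracts the nilpotent tautological class
`c_j`, `s n = P (c^n)` are the coefficients of the Segre series of the step, and for each `t` in
the finite index set `T`, `F_t(v) = Σ_d a_{t,d} v^d` is a Laurent series with coefficients in
`R` (vanishing in large degrees) together with an integer `m_t`, abstracting the factors
`Q_{m_i}` viewed in the single variable `u_i` (`i > j`).  The inner factor
`Σ_{β ≥ 0} a_{t, e_t + β} C(e_t + β, β) m_t^β c^β` is the coefficient of `v_t^{e_t}` in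
`F_t(v_t + m_t c)` expanded in non-negative powers of `c`; the conclusion states that all the
displayed sums have finite support and that pushing forward
`c^{n + Σ_u n_u} · Π_t (coefficient of v_t^{e_t} in F_t(v_t + m_t c))` yields
`Σ_{(β_t)} s_{n + Σ_u n_u + Σ_t β_t} Π_t a_{t, e_t + β_t} C(e_t + β_t, β_t) m_t^{β_t}`.
`Ring.choose d β` is the generalized binomial coefficient `C(d, β) = d(d-1)⋯(d-β+1)/β!`. -/
theorem pushforward_tower_inductive_step
    (R R' : Type*) [CommRing R] [CommRing R']
    (f : R →+* R') (P : R' →+ R)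
    (hproj : ∀ (a : R) (b : R'), P (f a * b) = a * P b)
    (c : R') (hc : IsNilpotent c)
    (s : ℕ → R) (hs : ∀ n : ℕ, P (c ^ n) = s n)
    (T : Type) [Fintype T]
    (m : T → ℤ) (a : T → ℤ → R)
    (ha : ∀ t, ∃ D : ℤ, ∀ d : ℤ, D ≤ d → a t d = 0)
    (A : Type) [Fintype A] (na : A → ℕ)
    (n : ℕ) (e : T → ℤ) :
    (∀ t, (Function.support fun β : ℕ =>
        f (a t (e t + β)) * ((Ring.choose (e t + (β : ℤ)) β * m t ^ β : ℤ) : R') * c ^ β).Finite)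
    ∧
    (Function.support fun β : T → ℕ =>
        s (n + ∑ u, na u + ∑ t, β t) *
          ∏ t, a t (e t + β t) *
            ((Ring.choose (e t + (β t : ℤ)) (β t) * m t ^ β t : ℤ) : R)).Finite
    ∧
    P (c ^ (n + ∑ u, na u) *
        ∏ t, ∑ᶠ β : ℕ,
          f (a t (e t + β)) * ((Ring.choose (e t + (β : ℤ)) β * m t ^ β : ℤ) : R') * c ^ β) =
      ∑ᶠ β : T → ℕ,
        s (n + ∑ u, na u + ∑ t, β t) *
          ∏ t, a t (e t + β t) *
            ((Ring.choose (e t + (β t : ℤ)) (β t) * m t ^ β t : ℤ) : R) := by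
  classical
  obtain ⟨N, hN⟩ := hc
  have hcz : ∀ k : ℕ, N ≤ k → c ^ k = 0 := by
    intro k hk
    rw [← Nat.sub_add_cancel hk, pow_add, hN, mul_zero]
  have hs0 : ∀ k : ℕ, N ≤ k → s k = 0 := by
    intro k hk
    rw [← hs, hcz k hk, map_zero]
  have hsub1 : ∀ t, (Function.support fun β : ℕ =>
      f (a t (e t + β)) * ((Ring.choose (e t + (β : ℤ)) β * m t ^ β : ℤ) : R') * c ^ β)
      ⊆ ↑(Finset.range N) := by
    intro t β hβ
    simp only [Function.mem_support, ne_eq] at hβ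
    simp only [Finset.coe_range, Set.mem_Iio]
    by_contra h
    push_neg at h
    exact hβ (by rw [hcz β h, mul_zero])
  have hsub2 : (Function.support fun β : T → ℕ =>
      s (n + ∑ u, na u + ∑ t, β t) *
        ∏ t, a t (e t + β t) *
          ((Ring.choose (e t + (β t : ℤ)) (β t) * m t ^ β t : ℤ) : R))
      ⊆ ↑(Fintype.piFinset fun _ : T => Finset.range N) := by
    intro β hβ
    simp only [Function.mem_support, ne_eq] at hβ
    by_contra h
    apply hβ
    have hex : ∃ t, N ≤ β t := by
      simpa [Fintype.mem_piFinset, Finset.mem_range, not_lt] using h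
    obtain ⟨t, ht⟩ := hex
    have hle : N ≤ n + ∑ u, na u + ∑ t, β t :=
      le_trans (le_trans ht (Finset.single_le_sum (fun _ _ => Nat.zero_le _)
        (Finset.mem_univ t))) (Nat.le_add_left _ _)
    rw [hs0 _ hle, zero_mul]
  refine ⟨fun t => Set.Finite.subset (Finset.range N).finite_toSet (hsub1 t),
    Set.Finite.subset (Fintype.piFinset fun _ : T => Finset.range N).finite_toSet hsub2, ?_⟩
  rw [finsum_eq_sum_of_support_subset _ hsub2]
  have h1 : ∀ t : T, (∑ᶠ β : ℕ,
      f (a t (e t + β)) * ((Ring.choose (e t + (β : ℤ)) β * m t ^ β : ℤ) : R') * c ^ β)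
      = ∑ β ∈ Finset.range N,
        f (a t (e t + β)) * ((Ring.choose (e t + (β : ℤ)) β * m t ^ β : ℤ) : R') * c ^ β :=
    fun t => finsum_eq_sum_of_support_subset _ (hsub1 t)
  simp only [h1]
  rw [Finset.prod_univ_sum, Finset.mul_sum, map_sum]
  refine Finset.sum_congr rfl fun β _ => ?_
  have hterm : (∏ t : T, f (a t (e t + β t)) *
      ((Ring.choose (e t + (β t : ℤ)) (β t) * m t ^ β t : ℤ) : R') * c ^ β t)
      = f (∏ t : T, a t (e t + β t) *
          ((Ring.choose (e t + (β t : ℤ)) (β t) * m t ^ β t : ℤ) : R)) * c ^ (∑ t, β t) := by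
    rw [Finset.prod_mul_distrib, map_prod, Finset.prod_pow_eq_pow_sum]
    congr 1
    refine Finset.prod_congr rfl fun t _ => ?_
    rw [map_mul, map_intCast]
  rw [hterm, mul_comm (c ^ (n + ∑ u, na u)), mul_assoc, ← pow_add, hproj, hs, mul_comm]
  congr 2
  omega
end

section
/- Algebraic form of Proposition 3.1 (integration over the complete flag variety): Let a formal push-forward tower (commutative rings R_0, …, R_k, pull-backs f_i, push-forwards P_i satisfying the projection formula, nilpotent tautological classes c_i) satisfy, for every 1 ≤ i ≤ k and every integer n ≥ 0, P_i(c_i^n) = the coefficient of u^{−n−1} in u^{−(k+1)} (u − c_1)(u − c_2) ⋯ (u − c_{i−1}); explicitly, P_i(c_i^n) = (−1)^{n+i−k−1} e_{n+i−k−1}(c_1, …, c_{i−1}) ∈ R_{i−1}, where e_r denotes the r-th elementary symmetric polynomial (with e_0 = 1 and e_r = 0 for r < 0 or r > i − 1). Then for all nonnegative integers n_1, …, n_k, (P_1 ∘ P_2 ∘ ⋯ ∘ P_k)( c_1^{n_1} c_2^{n_2} ⋯ c_k^{n_k} ) = N · 1_{R_0}, where N ∈ ℤ is the coefficient of the monomial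 u_1^{k−n_1} u_2^{k−n_2} ⋯ u_k^{k−n_k} in the Vandermonde polynomial Π_{1 ≤ i < j ≤ k} (u_j − u_i) ∈ ℤ[u_1, …, u_k]; in particular N = 0 unless (k − n_1, …, k − n_k) is a permutation of (0, 1, …, k − 1), in which case N is the sign of that permutation. Equivalently, in the paper's notation, ∫_F (u_1 − c_1)^{−1} ⋯ (u_k − c_k)^{−1} = (u_1 ⋯ u_k)^{−k−1} Π_{1 ≤ i < j ≤ k} (u_j − u_i). -/
open scoped Classical
open Polynomial

/-- The integer `N` of Proposition 3.1: the coefficient of the monomial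
`u_1^{k - n_1} ⋯ u_k^{k - n_k}` in the Vandermonde polynomial
`Π_{1 ≤ i < j ≤ k} (u_j - u_i) ∈ ℤ[u_1, …, u_k]` (zero when some `n_i > k`, since then no such
monomial exists).  Here the Lean index `i : Fin k` corresponds to the paper index `i + 1`. -/
noncomputable def vandermondeCoeff (k : ℕ) (n : ℕ → ℕ) : ℤ :=
  if ∀ i : Fin k, n (i.1 + 1) ≤ k then
    MvPolynomial.coeff (Finsupp.equivFunOnFinite.symm fun i : Fin k => k - n (i.1 + 1))
      (∏ p ∈ Finset.univ.filter fun p : Fin k × Fin k => p.1 < p.2,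
        (MvPolynomial.X p.2 - MvPolynomial.X p.1 : MvPolynomial (Fin k) ℤ))
  else 0

lemma det_rows_add_smul {R : Type*} [CommRing R] {j : ℕ} (t : R)
    (w w' : Fin j → Fin j → R) :
    Matrix.det (Matrix.of fun i => w i + t • w' i) =
      ∑ s : Finset (Fin j), t ^ s.card *
        Matrix.det (Matrix.of fun i => s.piecewise w' w i) := by
  classical
  set f := (Matrix.detRowAlternating : AlternatingMap R (Fin j → R) R (Fin j)).toMultilinearMap
    with hf
  have key := f.map_add_univ (fun i => t • w' i) w
  have h1 : ((fun i => t • w' i) + w) = fun i => w i + t • w' i := by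
    funext i; exact add_comm _ _
  have h2 : ∀ s : Finset (Fin j),
      f (s.piecewise (fun i => t • w' i) w)
      = t ^ s.card * Matrix.det (Matrix.of fun i => s.piecewise w' w i) := by
    intro s
    have hu : s.piecewise (fun i => t • w' i) w
        = s.piecewise (fun i => (fun _ => t) i • (s.piecewise w' w) i) (s.piecewise w' w) := by
      funext i
      by_cases hi : i ∈ s <;>
        simp [Finset.piecewise_eq_of_mem, Finset.piecewise_eq_of_notMem, hi]
    rw [hu, f.map_piecewise_smul]
    simp only [Finset.prod_const, smul_eq_mul]
    congr 1
  calc Matrix.det (Matrix.of fun i => w i + t • w' i)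
      = f (fun i => w i + t • w' i) := rfl
    _ = f ((fun i => t • w' i) + w) := by rw [h1]
    _ = _ := by rw [key]; exact Finset.sum_congr rfl fun s _ => h2 s

lemma card_filter_le_fin (j d : ℕ) :
    ((Finset.univ : Finset (Fin j)).filter fun i => d ≤ i.1).card = j - d := by
  rw [← Nat.card_Ico d j]
  refine Finset.card_bij' (fun (i : Fin j) _ => i.1)
    (fun a ha => (⟨a, (Finset.mem_Ico.1 ha).2⟩ : Fin j)) ?_ ?_ ?_ ?_
  · intro a ha
    simp only [Finset.mem_filter, Finset.mem_univ, true_and] at ha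
    exact Finset.mem_Ico.2 ⟨ha, a.isLt⟩
  · intro a ha
    simp only [Finset.mem_filter, Finset.mem_univ, true_and]
    exact (Finset.mem_Ico.1 ha).1
  · intro a ha; rfl
  · intro a ha; rfl

lemma upward_closed_eq (j : ℕ) (s : Finset (Fin j))
    (hcl : ∀ i : Fin j, i ∈ s → ∀ h : i.1 + 1 < j, (⟨i.1 + 1, h⟩ : Fin j) ∈ s) :
    s = Finset.univ.filter fun i => j - s.card ≤ i.1 := by
  have aux : ∀ t : ℕ, ∀ a : Fin j, a ∈ s → ∀ h : a.1 + t < j, (⟨a.1 + t, h⟩ : Fin j) ∈ s := by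
    intro t
    induction t with
    | zero => intro a ha h; simpa using ha
    | succ t ih =>
        intro a ha h
        have h' : a.1 + t < j := by omega
        have := hcl ⟨a.1 + t, h'⟩ (ih a ha h') (by show a.1 + t + 1 < j; omega)
        exact this
  have mono : ∀ a : Fin j, a ∈ s → ∀ b : Fin j, a.1 ≤ b.1 → b ∈ s := by
    intro a ha b hab
    have h : a.1 + (b.1 - a.1) < j := by have := b.isLt; omega
    have := aux (b.1 - a.1) a ha h
    have hb : (⟨a.1 + (b.1 - a.1), h⟩ : Fin j) = b := by
      apply Fin.ext; simp; omega
    rwa [hb] at this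
  by_cases hs : s.Nonempty
  · set a := s.min' hs with ha_def
    have ha : a ∈ s := s.min'_mem hs
    have heq : s = Finset.univ.filter fun i => a.1 ≤ i.1 := by
      ext b
      simp only [Finset.mem_filter, Finset.mem_univ, true_and]
      exact ⟨fun hb => s.min'_le b hb, fun hb => mono a ha b hb⟩
    have hcard : s.card = j - a.1 := by rw [heq, card_filter_le_fin]
    have hval : j - s.card = a.1 := by have := a.isLt; omega
    rw [hval]; exact heq
  · rw [Finset.not_nonempty_iff_eq_empty] at hs
    subst hs
    ext i
    simp only [Finset.notMem_empty, Finset.mem_filter, Finset.mem_univ, true_and,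
      Finset.card_empty, Nat.sub_zero, false_iff]
    have := i.isLt; intro hi; exact absurd (Finset.mem_filter.1 hi).2 (by show ¬ j ≤ i.1; omega)

lemma det_shift (j : ℕ) (v : Fin j → ℤ) (d : ℕ) (hd : d ≤ j) :
    Matrix.det (Matrix.of fun i l : Fin j =>
        if v l = (if i.1 < d then (i.1 : ℤ) else (i.1 : ℤ) + 1) then (1 : ℤ) else 0)
    = ∑ S ∈ (Finset.univ : Finset (Fin j)).powersetCard (j - d),
        Matrix.det (Matrix.of fun i l : Fin j =>
          if v l = (i.1 : ℤ) + (if l ∈ S then 1 else 0) then (1 : ℤ) else 0) := by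
  classical
  set r := j - d with hr
  -- integer matrices
  set A : Finset (Fin j) → Matrix (Fin j) (Fin j) ℤ := fun s => Matrix.of fun i l =>
    if v l = (i.1 : ℤ) + (if i ∈ s then 1 else 0) then (1 : ℤ) else 0 with hA
  set B : Finset (Fin j) → Matrix (Fin j) (Fin j) ℤ := fun S => Matrix.of fun i l =>
    if v l = (i.1 : ℤ) + (if l ∈ S then 1 else 0) then (1 : ℤ) else 0 with hB
  set P0 : Fin j → Fin j → Polynomial ℤ := fun i l =>
    if v l = (i.1 : ℤ) then 1 else 0 with hP0
  set P1 : Fin j → Fin j → Polynomial ℤ := fun i l =>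
    if v l = (i.1 : ℤ) + 1 then 1 else 0 with hP1
  set Q0 : Fin j → Fin j → Polynomial ℤ := fun l i => P0 i l with hQ0
  set Q1 : Fin j → Fin j → Polynomial ℤ := fun l i => P1 i l with hQ1
  have hrow := det_rows_add_smul (X : Polynomial ℤ) P0 P1
  have hcol := det_rows_add_smul (X : Polynomial ℤ) Q0 Q1
  have hdet_eq : Matrix.det (Matrix.of fun l => Q0 l + (X : Polynomial ℤ) • Q1 l)
      = Matrix.det (Matrix.of fun i => P0 i + (X : Polynomial ℤ) • P1 i) := by
    rw [← Matrix.det_transpose (Matrix.of fun i => P0 i + (X : Polynomial ℤ) • P1 i)]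
    congr 1
  have hmain : (∑ s : Finset (Fin j), (X : Polynomial ℤ) ^ s.card *
        Matrix.det (Matrix.of fun i => s.piecewise P1 P0 i))
      = ∑ S : Finset (Fin j), (X : Polynomial ℤ) ^ S.card *
        Matrix.det (Matrix.of fun l => S.piecewise Q1 Q0 l) := by
    rw [← hrow, ← hcol, hdet_eq]
  -- rewrite each polynomial determinant as C applied to an integer determinant
  have hrowC : ∀ s : Finset (Fin j),
      Matrix.det (Matrix.of fun i => s.piecewise P1 P0 i) = C (Matrix.det (A s)) := by
    intro s
    rw [RingHom.map_det]
    congr 1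
    ext i l
    by_cases hi : i ∈ s <;>
      simp [hA, hP0, hP1, Finset.piecewise_eq_of_mem, Finset.piecewise_eq_of_notMem, hi,
        Matrix.map_apply, apply_ite (C : ℤ → Polynomial ℤ)]
  have hcolC : ∀ S : Finset (Fin j),
      Matrix.det (Matrix.of fun l => S.piecewise Q1 Q0 l) = C (Matrix.det (B S)) := by
    intro S
    rw [RingHom.map_det, ← Matrix.det_transpose ((C : ℤ →+* Polynomial ℤ).mapMatrix (B S))]
    congr 1
    ext l i
    by_cases hl : l ∈ S <;>
      simp [hB, hQ0, hQ1, hP0, hP1, Finset.piecewise_eq_of_mem, Finset.piecewise_eq_of_notMem, hl,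
        Matrix.map_apply, Matrix.transpose_apply, RingHom.mapMatrix_apply,
        apply_ite (C : ℤ → Polynomial ℤ)]
  simp only [hrowC, hcolC] at hmain
  -- take the coefficient of X^r on both sides
  have hco := congrArg (fun p : Polynomial ℤ => p.coeff r) hmain
  simp only [Polynomial.finset_sum_coeff, mul_comm ((X : Polynomial ℤ) ^ _) (C _),
    Polynomial.coeff_C_mul, Polynomial.coeff_X_pow, mul_ite, mul_one, mul_zero] at hco
  -- identify the left side with the single upward-closed set
  set s0 : Finset (Fin j) := Finset.univ.filter fun i => d ≤ i.1 with hs0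
  have hs0card : s0.card = r := by rw [hs0, card_filter_le_fin]
  have hleft : (∑ s : Finset (Fin j), if r = s.card then Matrix.det (A s) else 0)
      = Matrix.det (A s0) := by
    rw [Finset.sum_eq_single s0]
    · rw [if_pos hs0card.symm]
    · intro s _ hne
      by_cases hcard : r = s.card
      · rw [if_pos hcard]
        -- s is not upward-closed, hence two equal rows
        have hnotcl : ¬ ∀ i : Fin j, i ∈ s → ∀ h : i.1 + 1 < j, (⟨i.1 + 1, h⟩ : Fin j) ∈ s := by
          intro hcl
          apply hne
          rw [upward_closed_eq j s hcl, hs0]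
          congr 1
          funext i
          have : j - s.card = d := by omega
          rw [this]
        push_neg at hnotcl
        obtain ⟨i, his, h1, hnot⟩ := hnotcl
        apply Matrix.det_zero_of_row_eq (i := i) (j := (⟨i.1 + 1, h1⟩ : Fin j))
          (fun hh => by simpa using congrArg Fin.val hh)
        funext l
        show (if v l = (i.1 : ℤ) + (if i ∈ s then 1 else 0) then (1:ℤ) else 0)
            = if v l = ((i.1 + 1 : ℕ) : ℤ) + (if (⟨i.1 + 1, h1⟩ : Fin j) ∈ s then 1 else 0)
              then 1 else 0
        rw [if_pos his, if_neg hnot]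
        norm_num
      · rw [if_neg hcard]
    · intro h; exact absurd (Finset.mem_univ s0) h
  rw [hleft] at hco
  -- identify the right side with the sum over powersetCard
  have hright : (∑ S : Finset (Fin j), if r = S.card then Matrix.det (B S) else 0)
      = ∑ S ∈ (Finset.univ : Finset (Fin j)).powersetCard r, Matrix.det (B S) := by
    rw [Finset.powersetCard_eq_filter, Finset.powerset_univ, Finset.sum_filter]
    apply Finset.sum_congr rfl
    intro S _
    by_cases h : S.card = r
    · rw [if_pos h, if_pos h.symm]
    · rw [if_neg h, if_neg fun hh => h hh.symm]
  rw [hright] at hco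
  -- finally identify the original determinant with det (A s0)
  have hA0 : Matrix.det (A s0) = Matrix.det (Matrix.of fun i l : Fin j =>
      if v l = (if i.1 < d then (i.1 : ℤ) else (i.1 : ℤ) + 1) then (1 : ℤ) else 0) := by
    congr 1
    ext i l
    simp only [hA, hs0, Matrix.of_apply, Finset.mem_filter, Finset.mem_univ, true_and]
    by_cases hi : i.1 < d
    · have h1 : ¬ d ≤ i.1 := by omega
      simp [h1, hi]
    · have h1 : d ≤ i.1 := by omega
      simp [h1, hi]
  rw [hA0] at hco
  exact hco

noncomputable def DetD (k j : ℕ) (m : ℕ → ℕ) : ℤ :=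
  Matrix.det (Matrix.of fun i l : Fin j =>
    if (k : ℤ) - m (l.1 + 1) = (i.1 : ℤ) then 1 else 0)

lemma DetD_zero (k : ℕ) (m : ℕ → ℕ) : DetD k 0 m = 1 := Matrix.det_fin_zero

lemma DetD_out (k j : ℕ) (m : ℕ → ℕ)
    (h : (k : ℤ) - m (j + 1) < 0 ∨ (j : ℤ) < (k : ℤ) - m (j + 1)) :
    DetD k (j + 1) m = 0 := by
  apply Matrix.det_eq_zero_of_column_eq_zero (Fin.last j)
  intro i
  simp only [Matrix.of_apply, Fin.val_last]
  rw [if_neg]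
  intro heq
  have hi := i.isLt
  omega

lemma DetD_rec (k j : ℕ) (m : ℕ → ℕ) (h : k ≤ m (j + 1) + j) :
    DetD k (j + 1) m = (-1) ^ (m (j + 1) + j - k) *
      ∑ S ∈ (Finset.Icc 1 j).powersetCard (m (j + 1) + j - k),
        DetD k j (fun i => m i + if i ∈ S then 1 else 0) := by
  classical
  by_cases h2 : m (j + 1) ≤ k
  swap
  · rw [DetD_out k j m (Or.inl (by push_cast; omega))]
    rw [Finset.powersetCard_eq_empty.2 (by rw [Nat.card_Icc]; omega), Finset.sum_empty, mul_zero]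
  set r := m (j + 1) + j - k with hrdef
  set d := k - m (j + 1) with hddef
  have hd : d ≤ j := by omega
  have hrd : r = j - d := by omega
  set dF : Fin (j + 1) := ⟨d, by omega⟩ with hdF
  set v : Fin j → ℤ := fun l => (k : ℤ) - m (l.1 + 1) with hv
  set emb : Fin j ↪ ℕ := ⟨fun l : Fin j => l.1 + 1,
    fun a b hab => Fin.ext (Nat.succ_injective hab)⟩ with hemb
  -- expand along the last column
  rw [DetD, Matrix.det_succ_column _ (Fin.last j),
      Finset.sum_eq_single dF]
  · -- the main term
    have hentry : (Matrix.of fun i l : Fin (j+1) =>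
        if (k : ℤ) - m (l.1 + 1) = (i.1 : ℤ) then (1:ℤ) else 0) dF (Fin.last j) = 1 := by
      simp only [Matrix.of_apply, Fin.val_last, hdF]
      rw [if_pos]; push_cast; omega
    rw [hentry, mul_one]
    -- identify the submatrix with the det_shift left-hand side
    have hsub : (Matrix.of fun i l : Fin (j+1) =>
          if (k : ℤ) - m (l.1 + 1) = (i.1 : ℤ) then (1:ℤ) else 0).submatrix dF.succAbove
            (Fin.last j).succAbove
        = Matrix.of fun i l : Fin j =>
          if v l = (if i.1 < d then (i.1 : ℤ) else (i.1 : ℤ) + 1) then (1 : ℤ) else 0 := by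
      ext i l
      simp only [Matrix.submatrix_apply, Matrix.of_apply, Fin.succAbove_last, hv]
      have hcast : ((Fin.castSucc l).1 : ℕ) = l.1 := rfl
      rw [hcast]
      congr 1
      by_cases hi : i.1 < d
      · rw [Fin.succAbove_of_castSucc_lt _ _ (by simp [Fin.lt_def, hdF]; omega)]
        simp [hi]
      · rw [Fin.succAbove_of_le_castSucc _ _ (by simp [Fin.le_def, hdF]; omega)]
        simp [hi, Fin.val_succ]
    rw [hsub, det_shift j v d hd]
    -- sign
    have hsign : (-1 : ℤ) ^ ((dF.1 : ℕ) + (Fin.last j).1) = (-1) ^ r := by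
      have : (dF.1 : ℕ) + (Fin.last j).1 = r + 2 * d := by
        simp only [hdF, Fin.val_last]; omega
      rw [this, pow_add, pow_mul, neg_one_sq, one_pow, mul_one]
    rw [hsign, ← hrd]
    congr 1
    -- reindex the sum over subsets
    refine Finset.sum_bij (fun S _ => S.map emb) ?_ ?_ ?_ ?_
    · intro S hS
      rw [Finset.mem_powersetCard] at hS ⊢
      constructor
      · intro x hx
        rw [Finset.mem_map] at hx
        obtain ⟨l, hl, rfl⟩ := hx
        simp only [hemb, Function.Embedding.coeFn_mk]
        exact Finset.mem_Icc.2 ⟨by show 1 ≤ l.1 + 1; omega, by have := l.isLt; show l.1 + 1 ≤ j; omega⟩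
      · rw [Finset.card_map, hS.2]
    · intro S1 h1 S2 h2 heq
      exact Finset.map_injective _ heq
    · intro S' hS'
      rw [Finset.mem_powersetCard] at hS'
      have hmapeq : (Finset.univ.filter fun l : Fin j => l.1 + 1 ∈ S').map emb = S' := by
        ext x
        simp only [Finset.mem_map, Finset.mem_filter, Finset.mem_univ, true_and, hemb,
          Function.Embedding.coeFn_mk]
        constructor
        · rintro ⟨l, hl, rfl⟩; exact hl
        · intro hx
          have hx2 := hS'.1 hx
          rw [Finset.mem_Icc] at hx2
          refine ⟨⟨x - 1, by omega⟩, ?_, by show x - 1 + 1 = x; omega⟩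
          have hxx : x - 1 + 1 = x := by omega
          simpa [hxx] using hx
      refine ⟨Finset.univ.filter fun l : Fin j => l.1 + 1 ∈ S', ?_, hmapeq⟩
      rw [Finset.mem_powersetCard]
      refine ⟨Finset.subset_univ _, ?_⟩
      have := congrArg Finset.card hmapeq
      rw [Finset.card_map] at this
      rw [this, hS'.2]
    · intro S hS
      rw [DetD]
      congr 1
      ext i l
      simp only [Matrix.of_apply, hv]
      by_cases hl : l ∈ S
      · have hl' : l.1 + 1 ∈ S.map emb := by
          have := (Finset.mem_map' emb (a := l) (s := S)).2 hl
          exact this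
        simp only [hl, hl', if_true]
        refine if_congr ?_ rfl rfl
        push_cast
        constructor <;> intro <;> omega
      · have hl' : l.1 + 1 ∉ S.map emb := by
          intro hcon
          apply hl
          have : emb l ∈ S.map emb := hcon
          exact (Finset.mem_map' emb).1 this
        simp only [hl, hl', if_false]
        refine if_congr ?_ rfl rfl
        push_cast
        constructor <;> intro <;> omega
  · -- other terms vanish
    intro i _ hne
    have : (Matrix.of fun i l : Fin (j+1) =>
        if (k : ℤ) - m (l.1 + 1) = (i.1 : ℤ) then (1:ℤ) else 0) i (Fin.last j) = 0 := by
      simp only [Matrix.of_apply, Fin.val_last]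
      rw [if_neg]
      intro heq
      apply hne
      apply Fin.ext
      simp only [hdF]
      omega
    rw [this, mul_zero, zero_mul]
  · intro hmem
    exact absurd (Finset.mem_univ dF) hmem

lemma DetD_eq_sum_perm (k j : ℕ) (m : ℕ → ℕ) :
    DetD k j m = ∑ σ : Equiv.Perm (Fin j),
      (Equiv.Perm.sign σ : ℤ) *
        (if ∀ i : Fin j, (k : ℤ) - m (i.1 + 1) = ((σ i).1 : ℤ) then 1 else 0) := by
  rw [DetD, Matrix.det_apply']
  apply Finset.sum_congr rfl
  intro σ _
  congr 1
  simp only [Matrix.of_apply]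
  rw [Fintype.prod_boole]
  congr 1

lemma prod_X_pow_univ (k : ℕ) (e : Fin k → ℕ) :
    (∏ i : Fin k, (MvPolynomial.X i : MvPolynomial (Fin k) ℤ) ^ e i)
      = MvPolynomial.monomial (Finsupp.equivFunOnFinite.symm e) 1 := by
  calc (∏ i : Fin k, (MvPolynomial.X i : MvPolynomial (Fin k) ℤ) ^ e i)
      = ∏ i : Fin k, (MvPolynomial.X i : MvPolynomial (Fin k) ℤ)
          ^ ((Finsupp.equivFunOnFinite.symm e) i) := by
        apply Finset.prod_congr rfl
        intro i _
        congr 1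
    _ = ∏ i ∈ (Finsupp.equivFunOnFinite.symm e).support,
          (MvPolynomial.X i : MvPolynomial (Fin k) ℤ) ^ ((Finsupp.equivFunOnFinite.symm e) i) := by
        refine (Finset.prod_subset (Finset.subset_univ _) ?_).symm
        intro x _ hx
        rw [Finsupp.notMem_support_iff.1 hx, pow_zero]
    _ = MvPolynomial.monomial (Finsupp.equivFunOnFinite.symm e) 1 :=
        MvPolynomial.prod_X_pow_eq_monomial

lemma filter_prod_eq_vdm (k : ℕ) : (∏ p ∈ Finset.univ.filter fun p : Fin k × Fin k => p.1 < p.2,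
        (MvPolynomial.X p.2 - MvPolynomial.X p.1 : MvPolynomial (Fin k) ℤ))
        = Matrix.det (Matrix.vandermonde
            (fun i : Fin k => (MvPolynomial.X i : MvPolynomial (Fin k) ℤ))) := by
  rw [Matrix.det_vandermonde, Finset.prod_sigma']
  refine (Finset.prod_nbij (fun p => (p.1, p.2)) ?a ?b ?c ?d).symm
  case a =>
    intro p hp
    simp only [Finset.mem_coe, Finset.mem_sigma, Finset.mem_univ, Finset.mem_Ioi, true_and] at hp
    simp only [Finset.mem_coe, Finset.mem_filter, Finset.mem_univ, true_and]
    exact hp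
  case b =>
    intro p hp q hq hpq
    simp only [Prod.mk.injEq] at hpq
    exact Sigma.ext hpq.1 (heq_of_eq hpq.2)
  case c =>
    intro p hp
    simp only [Finset.mem_coe, Finset.mem_filter, Finset.mem_univ, true_and] at hp
    refine ⟨⟨p.1, p.2⟩, ?_, rfl⟩
    simp only [Finset.mem_coe, Finset.mem_sigma, Finset.mem_univ, Finset.mem_Ioi, true_and]
    exact hp
  case d =>
    intro p hp; rfl

lemma vandermondeCoeff_eq (k : ℕ) (n : ℕ → ℕ) : vandermondeCoeff k n = DetD k k n := by
  by_cases hn : ∀ i : Fin k, n (i.1 + 1) ≤ k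
  · rw [vandermondeCoeff, if_pos hn, DetD_eq_sum_perm]
    have hprod := filter_prod_eq_vdm k
    rw [hprod, ← Matrix.det_transpose, Matrix.det_apply', MvPolynomial.coeff_sum]
    apply Finset.sum_congr rfl
    intro σ _
    have hent : ∀ i : Fin k, Matrix.transpose (Matrix.vandermonde
        (fun i : Fin k => (MvPolynomial.X i : MvPolynomial (Fin k) ℤ))) (σ i) i
        = (MvPolynomial.X i : MvPolynomial (Fin k) ℤ) ^ ((σ i).1 : ℕ) := by
      intro i; rfl
    rw [Finset.prod_congr rfl fun i _ => hent i]
    have hcast : (((Equiv.Perm.sign σ : ℤ) : MvPolynomial (Fin k) ℤ))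
        = MvPolynomial.C ((Equiv.Perm.sign σ : ℤ)) :=
      (eq_intCast (MvPolynomial.C : ℤ →+* MvPolynomial (Fin k) ℤ) _).symm
    rw [hcast, MvPolynomial.coeff_C_mul, prod_X_pow_univ k (fun i => ((σ i).1 : ℕ)),
      MvPolynomial.coeff_monomial]
    congr 1
    by_cases hcond : ∀ i : Fin k, (k : ℤ) - n (i.1 + 1) = ((σ i).1 : ℤ)
    · rw [if_pos, if_pos hcond]
      apply congrArg
      funext i
      have := hcond i
      have := hn i
      omega
    · rw [if_neg, if_neg hcond]
      intro heq
      apply hcond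
      intro i
      have := congrArg (fun g => g i) (Finsupp.equivFunOnFinite.symm.injective
        (by simpa using heq))
      simp only at this
      have := hn i
      omega
  · rw [vandermondeCoeff, if_neg hn, DetD_eq_sum_perm]
    push_neg at hn
    obtain ⟨i0, hi0⟩ := hn
    symm
    apply Finset.sum_eq_zero
    intro σ _
    rw [if_neg, mul_zero]
    intro hall
    have := hall i0
    omega

section push
variable {R : ℕ → Type*} [∀ i, CommRing (R i)] (P : ∀ i, R (i + 1) →+ R i)

lemma pushAll_zero : ∀ nn, pushAll P nn (0 : R nn) = 0 := by
  intro nn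
  induction nn with
  | zero => rfl
  | succ n ih => show pushAll P n (P n 0) = 0; rw [map_zero]; exact ih

lemma pushAll_sum {α : Type*} (s : Finset α) : ∀ nn (g : α → R nn),
    pushAll P nn (∑ a ∈ s, g a) = ∑ a ∈ s, pushAll P nn (g a) := by
  intro nn
  induction nn with
  | zero => intro g; rfl
  | succ n ih =>
      intro g
      show pushAll P n (P n (∑ a ∈ s, g a)) = _
      rw [map_sum]
      exact ih _

lemma pushAll_zsmul (z : ℤ) : ∀ nn (x : R nn),
    pushAll P nn (z • x) = z • pushAll P nn x := by
  intro nn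
  induction nn with
  | zero => intro x; rfl
  | succ n ih =>
      intro x
      show pushAll P n (P n (z • x)) = _
      rw [map_zsmul]
      exact ih _

end push

lemma tower_push (k : ℕ) (R : ℕ → Type*) [∀ i, CommRing (R i)]
    (f : ∀ i, R i →+* R (i + 1))
    (P : ∀ i, R (i + 1) →+ R i)
    (hproj : ∀ i (a : R i) (b : R (i + 1)), P i (f i a * b) = a * P i b)
    (c : ℕ → ∀ n', R n')
    (hc : ∀ i' n', 1 ≤ i' → i' ≤ n' → n' < k → c i' (n' + 1) = f n' (c i' n'))
    (hSegre : ∀ i, i < k → ∀ n : ℕ,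
      P i ((c (i + 1) (i + 1)) ^ n) =
        if k ≤ n + i then
          (-1 : R i) ^ (n + i - k) *
            ∑ S ∈ Finset.powersetCard (n + i - k) (Finset.Icc 1 i), ∏ j ∈ S, c j i
        else 0) :
    ∀ j, j ≤ k → ∀ m : ℕ → ℕ,
      pushAll P j (∏ i' ∈ Finset.Icc 1 j, c i' j ^ m i') = ((DetD k j m : ℤ) : R 0) := by
  intro j
  induction j with
  | zero =>
      intro _ m
      rw [Finset.Icc_eq_empty (by omega), Finset.prod_empty, DetD_zero]
      norm_num
      rfl
  | succ j ih =>
      intro hjk m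
      have hjk' : j < k := by omega
      rw [Finset.prod_Icc_succ_top (by omega : 1 ≤ j + 1)]
      have hpull : ∀ i' ∈ Finset.Icc 1 j, c i' (j + 1) ^ m i' = f j (c i' j ^ m i') := by
        intro i' hi'
        rw [Finset.mem_Icc] at hi'
        rw [hc i' j hi'.1 hi'.2 hjk', map_pow]
      rw [Finset.prod_congr rfl hpull, ← map_prod]
      show pushAll P j (P j (f j (∏ i' ∈ Finset.Icc 1 j, c i' j ^ m i') *
        c (j + 1) (j + 1) ^ m (j + 1))) = _
      rw [hproj, hSegre j hjk' (m (j + 1))]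
      by_cases hcase : k ≤ m (j + 1) + j
      · rw [if_pos hcase]
        set r := m (j + 1) + j - k with hr
        have hx : (∏ i' ∈ Finset.Icc 1 j, c i' j ^ m i') *
            ((-1 : R j) ^ r * ∑ S ∈ Finset.powersetCard r (Finset.Icc 1 j), ∏ i ∈ S, c i j)
          = ∑ S ∈ Finset.powersetCard r (Finset.Icc 1 j),
              ((-1 : ℤ) ^ r) • (∏ i' ∈ Finset.Icc 1 j,
                c i' j ^ (m i' + if i' ∈ S then 1 else 0)) := by
          rw [Finset.mul_sum, Finset.mul_sum]
          apply Finset.sum_congr rfl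
          intro S hS
          have hsub : S ⊆ Finset.Icc 1 j := (Finset.mem_powersetCard.1 hS).1
          have hprod2 : (∏ i' ∈ Finset.Icc 1 j, c i' j ^ (m i' + if i' ∈ S then 1 else 0))
              = (∏ i' ∈ Finset.Icc 1 j, c i' j ^ m i') * ∏ i ∈ S, c i j := by
            have e1 : ∀ i' ∈ Finset.Icc 1 j, c i' j ^ (m i' + if i' ∈ S then 1 else 0)
                = c i' j ^ m i' * (if i' ∈ S then c i' j else 1) := by
              intro i' _
              rw [pow_add]
              congr 1
              by_cases hi : i' ∈ S <;> simp [hi]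
            rw [Finset.prod_congr rfl e1, Finset.prod_mul_distrib]
            congr 1
            rw [Finset.prod_ite_mem, Finset.inter_eq_right.2 hsub]
          rw [hprod2, zsmul_eq_mul]
          push_cast
          ring
        rw [hx, pushAll_sum]
        have hterm : ∀ S ∈ Finset.powersetCard r (Finset.Icc 1 j),
            pushAll P j (((-1 : ℤ) ^ r) • (∏ i' ∈ Finset.Icc 1 j,
                c i' j ^ (m i' + if i' ∈ S then 1 else 0)))
            = ((-1 : ℤ) ^ r) • ((DetD k j (fun i => m i + if i ∈ S then 1 else 0) : ℤ) : R 0) := by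
          intro S _
          rw [pushAll_zsmul, ih (by omega) (fun i => m i + if i ∈ S then 1 else 0)]
        rw [Finset.sum_congr rfl hterm, ← Finset.smul_sum, DetD_rec k j m hcase]
        rw [← hr, Int.cast_mul, ← Int.cast_sum, zsmul_eq_mul]
      · rw [if_neg hcase, mul_zero, pushAll_zero]
        rw [DetD_out k j m (Or.inr (by push_cast; omega))]
        norm_num

/-- **Algebraic form of Proposition 3.1 of the paper** (integration over the complete flag
variety of `ℂ^{k+1}`).  A formal push-forward tower (commutative rings `R 0, …, R k`,
pull-backs `f`, push-forwards `P` satisfying the projection formula `hproj`, and nilpotent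
tautological classes: `c i' n'` is the image in `R n'` of `c_{i'} ∈ R_{i'}`, `1 ≤ i' ≤ n' ≤ k`)
is assumed to satisfy the Segre series hypothesis
`s(π^{i}, u) = (u - c_1) ⋯ (u - c_{i-1}) / u^{k+1}` of the flag-variety tower: coefficient-wise
(with Lean index `i`, paper index `i + 1`), `P_{i+1}(c_{i+1}^n)` equals the coefficient of
`u^{-n-1}` in `u^{-(k+1)} (u - c_1) ⋯ (u - c_i)`, which is
`(-1)^{n+i-k} e_{n+i-k}(c_1, …, c_i)` when `n + i ≥ k` and `0` otherwise, `e_r` being the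
`r`-th elementary symmetric polynomial (expanded as a sum over `r`-element subsets, so `e_0 = 1`
and `e_r = 0` for `r > i`).  Conclusion:
`(P_1 ∘ ⋯ ∘ P_k)(c_1^{n_1} ⋯ c_k^{n_k}) = N · 1` in `R 0`, where `N = vandermondeCoeff k n`;
moreover `N` is the sign of the permutation `σ` whenever `k - n_{i+1} = σ(i)` for all `i`
(i.e. `(k - n_1, …, k - n_k)` is a permutation of `(0, 1, …, k-1)`), and `N = 0` when no such
permutation exists.  This is the identity
`∫_F (u_1 - c_1)^{-1} ⋯ (u_k - c_k)^{-1} = (u_1 ⋯ u_k)^{-k-1} Π_{1 ≤ i < j ≤ k} (u_j - u_i)`. -/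
theorem flag_variety_integration
    {k : ℕ} (hk : 1 ≤ k)
    (R : ℕ → Type*) [∀ i, CommRing (R i)]
    (f : ∀ i, R i →+* R (i + 1))
    (P : ∀ i, R (i + 1) →+ R i)
    (hproj : ∀ i (a : R i) (b : R (i + 1)), P i (f i a * b) = a * P i b)
    (c : ℕ → ∀ n', R n')
    (hc : ∀ i' n', 1 ≤ i' → i' ≤ n' → n' < k → c i' (n' + 1) = f n' (c i' n'))
    (hnil : ∀ i' n', 1 ≤ i' → i' ≤ n' → n' ≤ k → IsNilpotent (c i' n'))
    (hSegre : ∀ i, i < k → ∀ n : ℕ,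
      P i ((c (i + 1) (i + 1)) ^ n) =
        if k ≤ n + i then
          (-1 : R i) ^ (n + i - k) *
            ∑ S ∈ Finset.powersetCard (n + i - k) (Finset.Icc 1 i), ∏ j ∈ S, c j i
        else 0)
    (n : ℕ → ℕ) :
    pushAll P k (∏ i' ∈ Finset.Icc 1 k, c i' k ^ n i') = (vandermondeCoeff k n : R 0) ∧
    (∀ σ : Equiv.Perm (Fin k), (∀ i : Fin k, (k : ℤ) - n (i.1 + 1) = (σ i : ℤ)) →
      vandermondeCoeff k n = Equiv.Perm.sign σ) ∧
    ((¬ ∃ σ : Equiv.Perm (Fin k), ∀ i : Fin k, (k : ℤ) - n (i.1 + 1) = (σ i : ℤ)) →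
      vandermondeCoeff k n = 0) := by
  refine ⟨?_, ?_, ?_⟩
  · rw [tower_push k R f P hproj c hc hSegre k le_rfl n, vandermondeCoeff_eq]
  · intro σ hσ
    rw [vandermondeCoeff_eq, DetD_eq_sum_perm]
    rw [Finset.sum_eq_single σ]
    · rw [if_pos, mul_one]
      intro i
      exact hσ i
    · intro τ _ hne
      rw [if_neg, mul_zero]
      intro hall
      apply hne
      apply Equiv.ext
      intro i
      have h1 := hall i
      have h2 := hσ i
      apply Fin.ext
      omega
    · intro h
      exact absurd (Finset.mem_univ σ) h
  · intro hno
    rw [vandermondeCoeff_eq, DetD_eq_sum_perm]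
    apply Finset.sum_eq_zero
    intro τ _
    rw [if_neg, mul_zero]
    intro hall
    exact hno ⟨τ, fun i => hall i⟩
end
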